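/- arXiv:2008.03117 — 6 statements merged into one kernel-verified Lean document; each statement's English description precedes it below -/
import Mathlib

section
/- Let π be a set of primes, G a finite group and H ≤ L ≤ G subgroups. If H is N^π-Dnormal in G, then H is N^π-Dnormal in L. -/
/-- A (finite) group is a `π`-group if every prime dividing its order lies in `π`. -/
def IsPiGroup (π : Set ℕ) (G : Type*) [Group G] : Prop :=
  ∀ p : ℕ, p.Prime → p ∣ Nat.card G → p ∈ π

/-- `O^π(G)`: the smallest normal subgroup of `G` whose quotient is a `π`-group
(recall that `N.index = Nat.card (G ⧸ N)`). -/
def piResidual (π : Set ℕ) (G : Type*) [Group G] : Subgroup G :=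
  ⨅ N ∈ {N : Subgroup G | N.Normal ∧ ∀ p : ℕ, p.Prime → p ∣ N.index → p ∈ π}, N

/-- `O_π(G)`: the largest normal `π`-subgroup of `G`. -/
def piCore (π : Set ℕ) (G : Type*) [Group G] : Subgroup G :=
  ⨆ N ∈ {N : Subgroup G | N.Normal ∧ IsPiGroup π N}, N

/-- `O^π(H)` for a subgroup `H ≤ G`, regarded as a subgroup of `G`. -/
def piResidualIn (π : Set ℕ) {G : Type*} [Group G] (H : Subgroup G) : Subgroup G :=
  (piResidual π H).map H.subtype

/-- `H` is `N^π`-Dnormal in `G`: if `|π| ≤ 1` this means `H` is normal in `G`; if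
`|π| ≥ 2` it means that `O^π(H)` is normal in `G` and `O^π(G)` normalizes `H`. -/
def IsDnormal (π : Set ℕ) {G : Type*} [Group G] (H : Subgroup G) : Prop :=
  (π.Subsingleton ∧ H.Normal) ∨
  (¬ π.Subsingleton ∧ (piResidualIn π H).Normal ∧ piResidual π G ≤ Subgroup.normalizer (H : Set G))

/-- `S` is `N^π`-Dsubnormal in `G`: there is a chain `S = S₀ ≤ S₁ ≤ ⋯ ≤ Sₙ = G`
with each `Sᵢ` being `N^π`-Dnormal in `Sᵢ₊₁`. -/
def IsDsubnormal (π : Set ℕ) {G : Type*} [Group G] (S : Subgroup G) : Prop :=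
  ∃ (n : ℕ) (c : Fin (n + 1) → Subgroup G), c 0 = S ∧ c (Fin.last n) = ⊤ ∧
    ∀ i : Fin n, c i.castSucc ≤ c i.succ ∧
      IsDnormal π ((c i.castSucc).subgroupOf (c i.succ))

/-- `H` is subnormal in `G`. -/
def IsSubnormal' {G : Type*} [Group G] (H : Subgroup G) : Prop :=
  ∃ (n : ℕ) (c : Fin (n + 1) → Subgroup G), c 0 = H ∧ c (Fin.last n) = ⊤ ∧
    ∀ i : Fin n, c i.castSucc ≤ c i.succ ∧
      ((c i.castSucc).subgroupOf (c i.succ)).Normal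

/-- The class `N^π`: groups that are the (internal) direct product of a `π`-group and a
nilpotent `π'`-group. -/
def IsNPiGroup (π : Set ℕ) (G : Type*) [Group G] : Prop :=
  ∃ H K : Subgroup G, H.Normal ∧ K.Normal ∧ H ⊓ K = ⊥ ∧ H ⊔ K = ⊤ ∧
    IsPiGroup π H ∧ IsPiGroup πᶜ K ∧ Group.IsNilpotent K

/-- The `N^π`-residual `G^{N^π}`: the smallest normal subgroup of `G` whose quotient
belongs to the class `N^π`. -/
def nPiResidual (π : Set ℕ) (G : Type*) [Group G] : Subgroup G :=
  ⨅ N ∈ {N : Subgroup G | ∃ h : N.Normal, letI := h; IsNPiGroup π (G ⧸ N)}, N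

/-- `G` is `π'`-soluble: it has a normal series each of whose factors is either a
`π`-group or a `p`-group for some prime `p ∉ π`. -/
def IsPiPrimeSoluble (π : Set ℕ) (G : Type*) [Group G] : Prop :=
  ∃ (n : ℕ) (c : Fin (n + 1) → Subgroup G), c 0 = ⊥ ∧ c (Fin.last n) = ⊤ ∧
    ∀ i : Fin n, c i.castSucc ≤ c i.succ ∧
      ((c i.castSucc).subgroupOf (c i.succ)).Normal ∧
      ((∀ p : ℕ, p.Prime → p ∣ ((c i.castSucc).subgroupOf (c i.succ)).index → p ∈ π) ∨
        ∃ p : ℕ, p.Prime ∧ p ∉ π ∧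
          ∃ k : ℕ, ((c i.castSucc).subgroupOf (c i.succ)).index = p ^ k)

/-- An `N^π`-Fitting set of `G`. -/
def IsNPiFittingSet (π : Set ℕ) {G : Type*} [Group G] (F : Set (Subgroup G)) : Prop :=
  F.Nonempty ∧
  (∀ S ∈ F, ∀ T : Subgroup G, T ≤ S → IsDsubnormal π (T.subgroupOf S) → T ∈ F) ∧
  (∀ S ∈ F, ∀ T ∈ F, IsDnormal π (S.subgroupOf (S ⊔ T)) →
    IsDnormal π (T.subgroupOf (S ⊔ T)) → S ⊔ T ∈ F) ∧
  (∀ S ∈ F, ∀ x : G, S.map (MulAut.conj x).toMonoidHom ∈ F)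

/-- The `F`-radical `H_F` of a subgroup `H` of `G`: the join of all subgroups of `H`
belonging to `F` that are normal in `H`. -/
def fittingRadical {G : Type*} [Group G] (F : Set (Subgroup G)) (H : Subgroup G) : Subgroup G :=
  ⨆ S ∈ {S : Subgroup G | S ∈ F ∧ S ≤ H ∧ (S.subgroupOf H).Normal}, S

/-- `M` is an `F`-maximal subgroup of `K`. -/
def IsFMaximalIn {G : Type*} [Group G] (F : Set (Subgroup G)) (M K : Subgroup G) : Prop :=
  M ∈ F ∧ M ≤ K ∧ ∀ S ∈ F, S ≤ K → M ≤ S → S = M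

/-- `V` is an `F`-injector of `G`. -/
def IsInjector {G : Type*} [Group G] (F : Set (Subgroup G)) (V : Subgroup G) : Prop :=
  ∀ K : Subgroup G, IsSubnormal' K → IsFMaximalIn F (V ⊓ K) K

/-- `V` is an `F`-injector of the subgroup `N` of `G`. -/
def IsInjectorIn {G : Type*} [Group G] (F : Set (Subgroup G)) (V N : Subgroup G) : Prop :=
  V ≤ N ∧ ∀ K : Subgroup G, K ≤ N → IsSubnormal' (K.subgroupOf N) → IsFMaximalIn F (V ⊓ K) K

/-- `M` is an `N^π`-maximal subgroup of `X`. -/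
def IsNPiMaximal (π : Set ℕ) {X : Type*} [Group X] (M : Subgroup X) : Prop :=
  IsNPiGroup π M ∧ ∀ M' : Subgroup X, IsNPiGroup π M' → M ≤ M' → M' = M

/-- `U` is an `N^π`-projector of `G`: `UK/K` is `N^π`-maximal in `G/K` for every
normal subgroup `K` of `G`. -/
def IsNPiProjector (π : Set ℕ) {G : Type*} [Group G] (U : Subgroup G) : Prop :=
  ∀ K : Subgroup G, ∀ hK : K.Normal,
    letI := hK
    IsNPiMaximal π ((U ⊔ K).map (QuotientGroup.mk' K))

/-- An `N^π`-Fitting class of (finite) groups: a non-empty isomorphism-closed class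
closed under `N^π`-Dnormal subgroups and under joins of pairs of `N^π`-Dnormal
subgroups. -/
def IsNPiFittingClass (π : Set ℕ) (F : (H : Type) → [_inst : Group H] → Prop) : Prop :=
  (∃ (H : Type) (g : Group H) (_ : Finite H), F H (_inst := g)) ∧
  (∀ (H K : Type) [Group H] [Group K] [Finite H] [Finite K],
    F H → Nonempty (H ≃* K) → F K) ∧
  (∀ (H : Type) [Group H] [Finite H] (N : Subgroup H),
    F H → IsDnormal π N → F ↥N) ∧
  (∀ (H : Type) [Group H] [Finite H] (M N : Subgroup H),
    F ↥M → F ↥N → IsDnormal π M → IsDnormal π N → M ⊔ N = ⊤ → F H)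

/-- `piResidual` is invariant under isomorphisms (via `comap`). -/
lemma piResidual_comap_equiv (π : Set ℕ) {A B : Type*} [Group A] [Group B] (e : A ≃* B) :
    (piResidual π B).comap e.toMonoidHom = piResidual π A := by
  have hrange : (e.toMonoidHom : A →* B).range = ⊤ :=
    MonoidHom.range_eq_top.mpr e.surjective
  have hrange' : (e.symm.toMonoidHom : B →* A).range = ⊤ :=
    MonoidHom.range_eq_top.mpr e.symm.surjective
  apply le_antisymm
  · -- ≤ each member of the defining set of `A`
    refine le_iInf fun M => le_iInf fun hM => ?_
    have hmapM : (M.map e.toMonoidHom) ∈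
        {N : Subgroup B | N.Normal ∧ ∀ p : ℕ, p.Prime → p ∣ N.index → p ∈ π} := by
      constructor
      · exact hM.1.map e.toMonoidHom e.surjective
      · intro p hp hdvd
        have hmc : M.map e.toMonoidHom = M.comap e.symm.toMonoidHom := by
          ext x
          simp [Subgroup.mem_map, Subgroup.mem_comap]
          constructor
          · rintro ⟨y, hy, rfl⟩; simpa using hy
          · intro hx; exact ⟨e.symm x, hx, by simp⟩
        have : (M.map e.toMonoidHom).index = M.index := by
          rw [hmc, Subgroup.index_comap, hrange', Subgroup.relIndex_top_right]
        exact hM.2 p hp (this ▸ hdvd)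
    have h1 : piResidual π B ≤ M.map e.toMonoidHom := iInf₂_le _ hmapM
    have h2 : (M.map e.toMonoidHom).comap e.toMonoidHom = M :=
      Subgroup.comap_map_eq_self_of_injective e.injective M
    calc (piResidual π B).comap e.toMonoidHom
        ≤ (M.map e.toMonoidHom).comap e.toMonoidHom := Subgroup.comap_mono h1
      _ = M := h2
  · intro a ha
    simp only [Subgroup.mem_comap]
    rw [piResidual, Subgroup.mem_iInf]
    intro N
    rw [Subgroup.mem_iInf]
    intro hN
    have hcomapN : (N.comap e.toMonoidHom) ∈
        {M : Subgroup A | M.Normal ∧ ∀ p : ℕ, p.Prime → p ∣ M.index → p ∈ π} := by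
      constructor
      · exact hN.1.comap e.toMonoidHom
      · intro p hp hdvd
        have : (N.comap e.toMonoidHom).index = N.index := by
          rw [Subgroup.index_comap, hrange, Subgroup.relIndex_top_right]
        exact hN.2 p hp (this ▸ hdvd)
    have := iInf₂_le (f := fun (M : Subgroup A) (_ : M ∈ _) => M) _ hcomapN ha
    exact this

/-- `O^π(L)`, viewed inside `G`, is contained in `O^π(G)`. -/
lemma piResidual_le (π : Set ℕ) {G : Type*} [Group G] [Finite G] (L : Subgroup G)
    {x : L} (hx : x ∈ piResidual π L) : (x : G) ∈ piResidual π G := by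
  rw [piResidual, Subgroup.mem_iInf]
  intro N
  rw [Subgroup.mem_iInf]
  intro hN
  have hnormal : (N.subgroupOf L).Normal := hN.1.subgroupOf L
  have hidx : ∀ p : ℕ, p.Prime → p ∣ (N.subgroupOf L).index → p ∈ π := by
    intro p hp hdvd
    haveI : N.Normal := hN.1
    have : (N.subgroupOf L).index ∣ N.index := Subgroup.relIndex_dvd_index_of_normal N L
    exact hN.2 p hp (hdvd.trans this)
  have h1 : piResidual π L ≤ N.subgroupOf L := by
    refine iInf_le_of_le (N.subgroupOf L) ?_
    exact iInf_le_of_le ⟨hnormal, hidx⟩ le_rfl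
  exact Subgroup.mem_subgroupOf.mp (h1 hx)

/-- `piResidualIn` of `H.subgroupOf L` equals `piResidualIn π H` pulled back to `L`. -/
lemma piResidualIn_subgroupOf (π : Set ℕ) {G : Type*} [Group G] (H L : Subgroup G)
    (hHL : H ≤ L) :
    piResidualIn π (H.subgroupOf L) = (piResidualIn π H).subgroupOf L := by
  set e : (H.subgroupOf L) ≃* H := Subgroup.subgroupOfEquivOfLe hHL
  have hcomm : L.subtype.comp (H.subgroupOf L).subtype = H.subtype.comp e.toMonoidHom := by
    ext x; rfl
  have hres : (piResidual π (H.subgroupOf L)).map e.toMonoidHom = piResidual π H := by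
    rw [← piResidual_comap_equiv π e]
    exact Subgroup.map_comap_eq_self_of_surjective e.surjective _
  have hmap : (piResidualIn π (H.subgroupOf L)).map L.subtype = piResidualIn π H := by
    unfold piResidualIn
    rw [Subgroup.map_map, hcomm, ← Subgroup.map_map, hres]
  have := Subgroup.comap_map_eq_self_of_injective L.subtype_injective
    (piResidualIn π (H.subgroupOf L))
  rw [← this, hmap]
  rfl

/-- Lemma 1.4(2): an `N^π`-Dnormal subgroup of `G` is `N^π`-Dnormal in every
intermediate subgroup. -/
theorem dnormal_of_le (π : Set ℕ) (hπ : ∀ p ∈ π, p.Prime)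
    (G : Type*) [Group G] [Finite G] (H L : Subgroup G) (hHL : H ≤ L)
    (h : IsDnormal π H) :
    IsDnormal π (H.subgroupOf L) := by
  rcases h with ⟨hss, hnorm⟩ | ⟨hss, hres, hnormz⟩
  · exact Or.inl ⟨hss, hnorm.subgroupOf L⟩
  · refine Or.inr ⟨hss, ?_, ?_⟩
    · rw [piResidualIn_subgroupOf π H L hHL]
      exact hres.subgroupOf L
    · intro x hx
      have hxG : (x : G) ∈ Subgroup.normalizer (H : Set G) := hnormz (piResidual_le π L hx)
      rw [Subgroup.mem_normalizer_iff] at hxG ⊢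
      intro n
      rw [Subgroup.mem_subgroupOf, Subgroup.mem_subgroupOf]
      simpa using hxG (n : G)
end

section
/- Let π be a set of primes, G a finite group, H a subgroup of G and N a normal subgroup of G. If H is N^π-Dnormal in G, then HN/N is N^π-Dnormal in G/N. -/
section Aux

variable (π : Set ℕ)

lemma piResidual_eq_sInf (G : Type*) [Group G] :
    piResidual π G =
      sInf {N : Subgroup G | N.Normal ∧ ∀ p : ℕ, p.Prime → p ∣ N.index → p ∈ π} :=
  sInf_eq_iInf.symm

lemma piResidual_mem (G : Type*) [Group G] [Finite G] :
    (piResidual π G).Normal ∧ ∀ p : ℕ, p.Prime → p ∣ (piResidual π G).index → p ∈ π := by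
  set S := {N : Subgroup G | N.Normal ∧ ∀ p : ℕ, p.Prime → p ∣ N.index → p ∈ π} with hS
  have htop : (⊤ : Subgroup G) ∈ S := by
    refine ⟨inferInstance, fun p hp hdvd => ?_⟩
    rw [Subgroup.index_top] at hdvd
    exact absurd (Nat.dvd_one.mp hdvd) hp.ne_one
  have hinf : ∀ A ∈ S, ∀ B ∈ S, A ⊓ B ∈ S := by
    rintro A ⟨hAn, hAi⟩ B ⟨hBn, hBi⟩
    refine ⟨⟨fun n hn g => ⟨hAn.conj_mem n hn.1 g, hBn.conj_mem n hn.2 g⟩⟩,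
      fun p hp hdvd => ?_⟩
    have h1 : (A ⊓ B).relIndex B * B.index = (A ⊓ B).index :=
      Subgroup.relIndex_mul_index inf_le_right
    rw [← h1, Subgroup.inf_relIndex_right] at hdvd
    rcases hp.dvd_mul.mp hdvd with h | h
    · exact hAi p hp (dvd_trans h (@Subgroup.relIndex_dvd_index_of_normal G _ A B hAn))
    · exact hBi p hp h
  have hfin : S.Finite := Set.toFinite S
  obtain ⟨m, hm, hmin⟩ : ∃ m ∈ S, ∀ a' ∈ S, id a' ≤ id m → id m = id a' := by
    obtain ⟨m, hm, hmin'⟩ := Set.Finite.exists_minimalFor id S hfin ⟨⊤, htop⟩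
    exact ⟨m, hm, fun a ha hle => le_antisymm (hmin' ha hle) hle⟩
  have hle : ∀ A ∈ S, m ≤ A := by
    intro A hA
    have := hmin (m ⊓ A) (hinf m hm A hA) inf_le_left
    simp only [id] at this
    rw [this]
    exact inf_le_right
  have : piResidual π G = m := by
    rw [piResidual_eq_sInf]
    exact le_antisymm (sInf_le hm) (le_sInf hle)
  rw [this]
  exact hm

lemma piResidual_map {G Q : Type*} [Group G] [Finite G] [Group Q] (f : G →* Q)
    (hf : Function.Surjective f) :
    (piResidual π G).map f = piResidual π Q := by
  have : Finite Q := Finite.of_surjective f hf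
  obtain ⟨hGn, hGi⟩ := piResidual_mem π G
  obtain ⟨hQn, hQi⟩ := piResidual_mem π Q
  apply le_antisymm
  · rw [Subgroup.map_le_iff_le_comap, piResidual_eq_sInf]
    refine sInf_le ⟨hQn.comap f, fun p hp hdvd => ?_⟩
    rw [Subgroup.index_comap_of_surjective _ hf] at hdvd
    exact hQi p hp hdvd
  · conv_lhs => rw [piResidual_eq_sInf]
    refine sInf_le ⟨hGn.map f hf, fun p hp hdvd => ?_⟩
    exact hGi p hp (dvd_trans hdvd (Subgroup.index_map_dvd _ hf))

lemma piResidualIn_map {G Q : Type*} [Group G] [Finite G] [Group Q] (f : G →* Q)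
    (H : Subgroup G) :
    piResidualIn π (H.map f) = (piResidualIn π H).map f := by
  have hsurj := f.subgroupMap_surjective H
  have hcomp : (H.map f).subtype.comp (f.subgroupMap H) = f.comp H.subtype := by
    ext x; rfl
  rw [piResidualIn, ← piResidual_map π (f.subgroupMap H) hsurj,
    Subgroup.map_map, hcomp, ← Subgroup.map_map, piResidualIn]

end Aux

/-- Lemma 1.4(3): the image `HN/N` of an `N^π`-Dnormal subgroup `H` of `G` is
`N^π`-Dnormal in `G/N`. -/
theorem dnormal_quotient (π : Set ℕ) (hπ : ∀ p ∈ π, p.Prime)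
    (G : Type*) [Group G] [Finite G] (H N : Subgroup G) [N.Normal]
    (h : IsDnormal π H) :
    IsDnormal π ((H ⊔ N).map (QuotientGroup.mk' N)) := by
  have hmap : (H ⊔ N).map (QuotientGroup.mk' N) = H.map (QuotientGroup.mk' N) := by
    rw [Subgroup.map_sup]
    have hbot : N.map (QuotientGroup.mk' N) = ⊥ :=
      (Subgroup.map_eq_bot_iff _).mpr (QuotientGroup.ker_mk' N).ge
    rw [hbot, sup_bot_eq]
  have hfq : Function.Surjective (QuotientGroup.mk' N) := QuotientGroup.mk'_surjective N
  rcases h with ⟨hs, hn⟩ | ⟨hs, hres, hnorm⟩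
  · left
    refine ⟨hs, ?_⟩
    haveI := hn
    haveI : (H ⊔ N).Normal := Subgroup.sup_normal H N
    exact this.map _ hfq
  · right
    refine ⟨hs, ?_, ?_⟩
    · rw [hmap, piResidualIn_map]
      exact hres.map _ hfq
    · rw [hmap, ← piResidual_map π (QuotientGroup.mk' N) hfq]
      exact le_trans (Subgroup.map_mono hnorm) (Subgroup.le_normalizer_map (H := H) (QuotientGroup.mk' N))
end

section
/- Let π be a set of primes and G a finite group belonging to the class N^π. Then every subgroup H of G is N^π-Dsubnormal in G. -/
section Helpers

variable {G : Type*} [Group G]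

/-- If `X` normalizes `Y`, then `Y.subgroupOf X` is normal in `X`. -/
lemma subgroupOf_normal_of_le_normalizer' {Y X : Subgroup G} (h : X ≤ Subgroup.normalizer (Y : Set G)) :
    (Y.subgroupOf X).Normal := by
  constructor
  rintro ⟨n, hnX⟩ hn ⟨g, hgX⟩
  simp only [Subgroup.mem_subgroupOf] at hn ⊢
  exact ((Subgroup.mem_normalizer_iff.mp (h hgX)) n).mp hn

lemma piResidual_le' {π : Set ℕ} {K : Type*} [Group K] {N : Subgroup K}
    (hN : N.Normal) (hidx : ∀ p : ℕ, p.Prime → p ∣ N.index → p ∈ π) :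
    piResidual π K ≤ N :=
  iInf₂_le N ⟨hN, hidx⟩

lemma le_piResidual' {π : Set ℕ} {K : Type*} [Group K] {P : Subgroup K}
    (hP : ∀ p : ℕ, p.Prime → p ∣ Nat.card P → p ∉ π) :
    P ≤ piResidual π K := by
  refine le_iInf fun N => le_iInf fun hmem => ?_
  obtain ⟨hN, hidx⟩ := hmem
  intro x hx
  have h1 : Nat.card (P.map (QuotientGroup.mk' N)) ∣ Nat.card P :=
    Subgroup.card_dvd_of_surjective ((QuotientGroup.mk' N).subgroupMap P)
      (MonoidHom.subgroupMap_surjective _ _)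
  have h2 : Nat.card (P.map (QuotientGroup.mk' N)) ∣ N.index := by
    rw [Subgroup.index_eq_card]
    exact Subgroup.card_subgroup_dvd_card _
  have hcard : Nat.card (P.map (QuotientGroup.mk' N)) = 1 := by
    by_contra hne
    obtain ⟨p, hp, hdvd⟩ := Nat.exists_prime_and_dvd hne
    exact hP p hp (hdvd.trans h1) (hidx p hp (hdvd.trans h2))
  have hbot : P.map (QuotientGroup.mk' N) = ⊥ := Subgroup.card_eq_one.mp hcard
  have : (QuotientGroup.mk' N) x ∈ P.map (QuotientGroup.mk' N) :=
    Subgroup.mem_map_of_mem _ hx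
  rw [hbot, Subgroup.mem_bot] at this
  rw [← QuotientGroup.ker_mk' N]
  exact this

lemma piResidualIn_subgroupOf_eq' {π : Set ℕ} {X Y B' : Subgroup G}
    (hYX : Y ≤ X) (hB'Y : B' ≤ Y)
    (hcard : ∀ p : ℕ, p.Prime → p ∣ Nat.card B' → p ∉ π)
    (hidx : ∀ p : ℕ, p.Prime → p ∣ B'.relIndex Y → p ∈ π)
    (hXnorm : X ≤ Subgroup.normalizer (B' : Set G)) :
    piResidualIn π (Y.subgroupOf X) = B'.subgroupOf X := by
  have hB'X : B' ≤ X := hB'Y.trans hYX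
  set K : Subgroup ↥X := Y.subgroupOf X with hK
  set S : Subgroup ↥X := B'.subgroupOf X with hS
  have hSK : S ≤ K := fun x hx => hB'Y hx
  have hSnormal : S.Normal := subgroupOf_normal_of_le_normalizer' hXnorm
  set N : Subgroup ↥K := S.subgroupOf K with hN
  have hNnormal : N.Normal := by
    refine subgroupOf_normal_of_le_normalizer' ?_
    rw [Subgroup.normalizer_eq_top_iff.mpr hSnormal]
    exact le_top
  have hNidx : N.index = B'.relIndex Y := by
    have : N.index = S.relIndex K := rfl
    rw [this, hK, hS, Subgroup.relIndex_subgroupOf hYX]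
  have h1 : piResidual π ↥K ≤ N :=
    piResidual_le' hNnormal (by rw [hNidx]; exact hidx)
  have hNcard : Nat.card N = Nat.card B' := by
    have e1 : Nat.card N = Nat.card S :=
      Nat.card_congr (Subgroup.subgroupOfEquivOfLe hSK).toEquiv
    have e2 : Nat.card S = Nat.card B' :=
      Nat.card_congr (Subgroup.subgroupOfEquivOfLe hB'X).toEquiv
    rw [e1, e2]
  have h2 : N ≤ piResidual π ↥K :=
    le_piResidual' (by rw [hNcard]; exact hcard)
  have h3 : piResidual π ↥K = N := le_antisymm h1 h2
  rw [piResidualIn, h3, hN, Subgroup.subgroupOf_map_subtype, inf_eq_left.mpr hSK]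

lemma piResidual_le_subgroupOf' {π : Set ℕ} {X B' : Subgroup G}
    (hnorm : X ≤ Subgroup.normalizer (B' : Set G))
    (hidx : ∀ p : ℕ, p.Prime → p ∣ B'.relIndex X → p ∈ π) :
    piResidual π ↥X ≤ B'.subgroupOf X :=
  piResidual_le' (subgroupOf_normal_of_le_normalizer' hnorm) hidx

lemma isDnormal_right' {π : Set ℕ} (hns : ¬ π.Subsingleton) {X Y B' : Subgroup G}
    (hYX : Y ≤ X) (hB'Y : B' ≤ Y)
    (hcard : ∀ p : ℕ, p.Prime → p ∣ Nat.card B' → p ∉ π)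
    (hidx : ∀ p : ℕ, p.Prime → p ∣ B'.relIndex Y → p ∈ π)
    (hXnorm : X ≤ Subgroup.normalizer (B' : Set G))
    (hresnorm : piResidual π ↥X ≤ Subgroup.normalizer (Y.subgroupOf X : Set ↥X)) :
    IsDnormal π (Y.subgroupOf X) := by
  refine Or.inr ⟨hns, ?_, hresnorm⟩
  rw [piResidualIn_subgroupOf_eq' hYX hB'Y hcard hidx hXnorm]
  exact subgroupOf_normal_of_le_normalizer' hXnorm

lemma inf_normalizer_le' {B' Y : Subgroup G} :
    Subgroup.normalizer (B' : Set G) ⊓ Subgroup.normalizer (Y : Set G) ≤ Subgroup.normalizer ((B' ⊓ Y : Subgroup G) : Set G) := by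
  intro x hx
  obtain ⟨h1, h2⟩ := Subgroup.mem_inf.mp hx
  rw [Subgroup.mem_normalizer_iff] at h1 h2 ⊢
  intro h
  simp only [Subgroup.mem_inf]
  exact and_congr (h1 h) (h2 h)

/-- conjugation and commutator properties of the (mapped) upper central series of a
normal subgroup `C` such that every element of `G` is a product of a centralizing
element and an element of `C`. -/
lemma ucs_map_conj' {C : Subgroup G}
    (hdec : ∀ g : G, ∃ a : G, (∀ y ∈ C, a * y = y * a) ∧ ∃ c ∈ C, g = a * c) :
    (∀ i : ℕ, ∀ g : G, ∀ z ∈ (Subgroup.upperCentralSeries ↥C i).map C.subtype,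
        g * z * g⁻¹ ∈ (Subgroup.upperCentralSeries ↥C i).map C.subtype) ∧
    (∀ i : ℕ, ∀ z ∈ (Subgroup.upperCentralSeries ↥C (i+1)).map C.subtype, ∀ x : G,
        z * x * z⁻¹ * x⁻¹ ∈ (Subgroup.upperCentralSeries ↥C i).map C.subtype) := by
  have part1 : ∀ i : ℕ, ∀ g : G, ∀ z ∈ (Subgroup.upperCentralSeries ↥C i).map C.subtype,
      g * z * g⁻¹ ∈ (Subgroup.upperCentralSeries ↥C i).map C.subtype := by
    intro i g z hz
    obtain ⟨a, hcen, c, hc, rfl⟩ := hdec g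
    obtain ⟨w, hw, rfl⟩ := Subgroup.mem_map.mp hz
    set b' : ↥C := ⟨c, hc⟩ with hb'
    have hnor : (Subgroup.upperCentralSeries ↥C i).Normal := inferInstance
    have hmem : (b' * w * b'⁻¹ : ↥C) ∈ Subgroup.upperCentralSeries ↥C i :=
      hnor.conj_mem w hw b'
    have hd : (c * (w : G) * c⁻¹) ∈ (Subgroup.upperCentralSeries ↥C i).map C.subtype := by
      refine ⟨b' * w * b'⁻¹, hmem, ?_⟩
      simp [hb']
    have hdC : (c * (w : G) * c⁻¹) ∈ C := C.mul_mem (C.mul_mem hc w.2) (C.inv_mem hc)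
    have e1 : (a * c) * (w : G) * (a * c)⁻¹ = a * (c * (w : G) * c⁻¹) * a⁻¹ := by group
    have e2 : a * (c * (w : G) * c⁻¹) * a⁻¹ = c * (w : G) * c⁻¹ := by
      rw [hcen _ hdC]; group
    show (a * c) * (w : G) * (a * c)⁻¹ ∈ _
    rw [e1, e2]
    exact hd
  refine ⟨part1, ?_⟩
  intro i z hz x
  obtain ⟨a, hcen, c, hc, rfl⟩ := hdec x
  obtain ⟨w, hw, rfl⟩ := Subgroup.mem_map.mp hz
  set b' : ↥C := ⟨c, hc⟩ with hb'
  have hmem : (w * b' * w⁻¹ * b'⁻¹ : ↥C) ∈ Subgroup.upperCentralSeries ↥C i :=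
    Subgroup.mem_upperCentralSeries_succ_iff.mp hw b'
  have hinner : ((w : G) * c * (w : G)⁻¹ * c⁻¹) ∈ (Subgroup.upperCentralSeries ↥C i).map C.subtype := by
    refine ⟨w * b' * w⁻¹ * b'⁻¹, hmem, ?_⟩
    simp [hb']
  have hwa : a * (w : G) = (w : G) * a := hcen _ w.2
  have e : (w : G) * (a * c) * (w : G)⁻¹ * (a * c)⁻¹
      = a * ((w : G) * c * (w : G)⁻¹ * c⁻¹) * a⁻¹ := by
    have e0 : (w : G) * (a * c) = a * ((w : G) * c) := by
      rw [← mul_assoc, ← hwa, mul_assoc]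
    rw [e0]; group
  show (w : G) * (a * c) * (w : G)⁻¹ * (a * c)⁻¹ ∈ _
  rw [e]
  exact part1 i a _ hinner

lemma sup_le_normalizer_chain' (H : Subgroup G) (Z : ℕ → Subgroup G)
    (hcomm : ∀ i, ∀ z ∈ Z (i+1), ∀ x : G, z * x * z⁻¹ * x⁻¹ ∈ Z i) (i : ℕ) :
    H ⊔ Z (i+1) ≤ Subgroup.normalizer ((H ⊔ Z i : Subgroup G) : Set G) := by
  have key : ∀ z ∈ Z (i+1), ∀ x ∈ H ⊔ Z i, z * x * z⁻¹ ∈ H ⊔ Z i := by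
    intro z hz x hx
    have h1 := hcomm i z hz x
    have e : z * x * z⁻¹ = (z * x * z⁻¹ * x⁻¹) * x := by group
    rw [e]
    exact mul_mem ((le_sup_right : Z i ≤ H ⊔ Z i) h1) hx
  refine sup_le (le_trans le_sup_left Subgroup.le_normalizer) fun z hz => ?_
  rw [Subgroup.mem_normalizer_iff]
  intro x
  constructor
  · exact fun hx => key z hz x hx
  · intro hx
    have h := key z⁻¹ (inv_mem hz) _ hx
    have e : z⁻¹ * (z * x * z⁻¹) * z⁻¹⁻¹ = x := by group
    rwa [e] at h

end Helpers

/-- Lemma 1.4(6): in a group of the class `N^π`, every subgroup is `N^π`-Dsubnormal. -/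
theorem dsubnormal_of_nPiGroup (π : Set ℕ) (hπ : ∀ p ∈ π, p.Prime)
    (G : Type*) [Group G] [Finite G] (hG : IsNPiGroup π G) (H : Subgroup G) :
    IsDsubnormal π H := by
  obtain ⟨A, B, hAnorm, hBnorm, hdisj, hsup, hA, hB, hBnil⟩ := hG
  haveI := hAnorm
  haveI := hBnorm
  haveI := hBnil
  have hcomm : ∀ a ∈ A, ∀ b ∈ B, Commute a b := fun a ha b hb =>
    Subgroup.commute_of_normal_of_disjoint A B hAnorm hBnorm (disjoint_iff.mpr hdisj) a b ha hb
  have hdecomp : ∀ g : G, ∃ a ∈ A, ∃ b ∈ B, g = a * b := by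
    intro g
    have hg : g ∈ A ⊔ B := by rw [hsup]; exact Subgroup.mem_top g
    rw [← SetLike.mem_coe, Subgroup.mul_normal A B] at hg
    obtain ⟨a, ha, b, hb, hab⟩ := hg
    exact ⟨a, ha, b, hb, hab.symm⟩
  obtain ⟨hZBconj, hZBcomm⟩ := ucs_map_conj' (C := B) (by
    intro g
    obtain ⟨a, ha, b, hb, rfl⟩ := hdecomp g
    exact ⟨a, fun y hy => (hcomm a ha y hy).eq, b, hb, rfl⟩)
  by_cases hss : π.Subsingleton
  · -- `π` has at most one element: both `A` and `B` are nilpotent, use normal chain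
    haveI hAnil : Group.IsNilpotent ↥A := by
      by_cases h1 : Nat.card ↥A = 1
      · haveI : Subsingleton ↥A := (Nat.card_eq_one_iff_unique.mp h1).1
        infer_instance
      · obtain ⟨p, hp, hpd⟩ := Nat.exists_prime_and_dvd h1
        have hpπ : p ∈ π := hA p hp hpd
        have hpos : Nat.card ↥A ≠ 0 := Nat.card_pos.ne'
        have hk : Nat.card ↥A = p ^ (Nat.card ↥A).primeFactorsList.length :=
          Nat.eq_prime_pow_of_unique_prime_dvd hpos
            (fun {d} hd hdd => hss (hA d hd hdd) hpπ)
        haveI : Fact p.Prime := ⟨hp⟩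
        exact (IsPGroup.of_card hk).isNilpotent
    obtain ⟨hZAconj, hZAcomm⟩ := ucs_map_conj' (C := A) (by
      intro g
      obtain ⟨a, ha, b, hb, rfl⟩ := hdecomp g
      exact ⟨b, fun y hy => ((hcomm y hy b hb).eq).symm, a, ha, (hcomm a ha b hb).eq⟩)
    set n := max (Group.nilpotencyClass ↥A) (Group.nilpotencyClass ↥B) with hn
    set W : ℕ → Subgroup G := fun i =>
      (Subgroup.upperCentralSeries ↥A i).map A.subtype ⊔ (Subgroup.upperCentralSeries ↥B i).map B.subtype
      with hWdef
    have hW0 : W 0 = ⊥ := by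
      show (Subgroup.upperCentralSeries ↥A 0).map A.subtype ⊔ (Subgroup.upperCentralSeries ↥B 0).map B.subtype = ⊥
      simp [Subgroup.upperCentralSeries_zero]
    have hWn : W n = ⊤ := by
      show (Subgroup.upperCentralSeries ↥A n).map A.subtype ⊔ (Subgroup.upperCentralSeries ↥B n).map B.subtype = ⊤
      rw [Subgroup.upperCentralSeries_eq_top_iff_nilpotencyClass_le.mpr (le_max_left _ _),
        Subgroup.upperCentralSeries_eq_top_iff_nilpotencyClass_le.mpr (le_max_right _ _),
        ← MonoidHom.range_eq_map, ← MonoidHom.range_eq_map,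
        Subgroup.range_subtype, Subgroup.range_subtype, hsup]
    have hWmono : ∀ i, W i ≤ W (i + 1) := fun i =>
      sup_le_sup (Subgroup.map_mono (Subgroup.upperCentralSeries_mono _ (Nat.le_succ i)))
        (Subgroup.map_mono (Subgroup.upperCentralSeries_mono _ (Nat.le_succ i)))
    have hWcomm : ∀ i, ∀ z ∈ W (i + 1), ∀ x : G, z * x * z⁻¹ * x⁻¹ ∈ W i := by
      intro i z hz x
      haveI : ((Subgroup.upperCentralSeries ↥B (i + 1)).map B.subtype).Normal :=
        ⟨fun m hm g => hZBconj (i + 1) g m hm⟩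
      rw [hWdef] at hz
      rw [← SetLike.mem_coe, Subgroup.mul_normal] at hz
      obtain ⟨u, hu, v, hv, huv⟩ := hz
      have h1 : u * (v * x * v⁻¹ * x⁻¹) * u⁻¹ ∈ (Subgroup.upperCentralSeries ↥B i).map B.subtype :=
        hZBconj i u _ (hZBcomm i v hv x)
      have h2 : u * x * u⁻¹ * x⁻¹ ∈ (Subgroup.upperCentralSeries ↥A i).map A.subtype :=
        hZAcomm i u hu x
      have e : (u * v) * x * (u * v)⁻¹ * x⁻¹
          = (u * (v * x * v⁻¹ * x⁻¹) * u⁻¹) * (u * x * u⁻¹ * x⁻¹) := by group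
      rw [← huv, e]
      exact mul_mem (Subgroup.mem_sup_right h1) (Subgroup.mem_sup_left h2)
    have hchain := sup_le_normalizer_chain' H W hWcomm
    refine ⟨n, fun i => H ⊔ W (i : ℕ), ?_, ?_, ?_⟩
    · show H ⊔ W ((0 : Fin (n + 1)) : ℕ) = H
      rw [Fin.val_zero, hW0, sup_bot_eq]
    · show H ⊔ W ((Fin.last n : Fin (n + 1)) : ℕ) = ⊤
      rw [Fin.val_last, hWn, sup_top_eq]
    · intro i
      constructor
      · simp only [Fin.coe_castSucc, Fin.val_succ]
        exact sup_le_sup_left (hWmono i) H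
      · simp only [Fin.coe_castSucc, Fin.val_succ]
        exact Or.inl ⟨hss, subgroupOf_normal_of_le_normalizer' (hchain (i : ℕ))⟩
  · -- `π` has at least two elements
    have hBcard : ∀ p : ℕ, p.Prime → p ∣ Nat.card ↥B → p ∉ π := fun p hp hd => hB p hp hd
    have hBidx : ∀ p : ℕ, p.Prime → p ∣ B.index → p ∈ π := by
      intro p hp hd
      have hsurj : Function.Surjective ((QuotientGroup.mk' B).comp A.subtype) := by
        intro q
        obtain ⟨g, rfl⟩ := QuotientGroup.mk'_surjective B q
        obtain ⟨a, ha, b, hb, rfl⟩ := hdecomp g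
        refine ⟨⟨a, ha⟩, ?_⟩
        show QuotientGroup.mk' B a = QuotientGroup.mk' B (a * b)
        rw [QuotientGroup.mk'_eq_mk']
        exact ⟨b, hb, rfl⟩
      have h2 : B.index ∣ Nat.card ↥A := by
        rw [Subgroup.index_eq_card]
        exact Subgroup.card_dvd_of_surjective _ hsurj
      exact hA p hp (hd.trans h2)
    set n := Group.nilpotencyClass ↥B with hn
    set Z : ℕ → Subgroup G := fun i => (Subgroup.upperCentralSeries ↥B i).map B.subtype with hZdef
    have hZn : Z n = B := by
      show (Subgroup.upperCentralSeries ↥B n).map B.subtype = B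
      rw [Subgroup.upperCentralSeries_nilpotencyClass, ← MonoidHom.range_eq_map, Subgroup.range_subtype]
    have hZ0 : Z 0 = ⊥ := by
      show (Subgroup.upperCentralSeries ↥B 0).map B.subtype = ⊥
      simp [Subgroup.upperCentralSeries_zero]
    have hZle : ∀ i, Z i ≤ B := fun i => Subgroup.map_subtype_le _
    have hZmono : ∀ i, Z i ≤ Z (i + 1) := fun i =>
      Subgroup.map_mono (Subgroup.upperCentralSeries_mono _ (Nat.le_succ i))
    have hchain := sup_le_normalizer_chain' H Z hZBcomm
    -- the generic middle/last step
    have hstep : ∀ Y : Subgroup G, ∀ X : Subgroup G, Y ≤ X → X ≤ Subgroup.normalizer (Y : Set G) →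
        B ⊓ X ≤ Y ⊔ Z 0 → True := fun _ _ _ _ _ => trivial
    refine ⟨n + 1, fun j => if (j : ℕ) ≤ n then H ⊔ Z (j : ℕ) else ⊤, ?_, ?_, ?_⟩
    · show (if ((0 : Fin (n + 2)) : ℕ) ≤ n then H ⊔ Z ((0 : Fin (n + 2)) : ℕ) else ⊤) = H
      rw [Fin.val_zero, if_pos (Nat.zero_le n), hZ0, sup_bot_eq]
    · show (if ((Fin.last (n + 1)) : ℕ) ≤ n then H ⊔ Z ((Fin.last (n + 1)) : ℕ) else ⊤) = ⊤
      rw [Fin.val_last, if_neg (by omega)]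
    · intro i
      have hile : (i : ℕ) ≤ n := Nat.lt_succ_iff.mp i.isLt
      simp only [Fin.coe_castSucc, Fin.val_succ]
      rw [if_pos hile]
      show (H ⊔ Z (i : ℕ) ≤ (if (i : ℕ) + 1 ≤ n then H ⊔ Z ((i : ℕ) + 1) else ⊤)) ∧
        IsDnormal π ((H ⊔ Z (i : ℕ)).subgroupOf (if (i : ℕ) + 1 ≤ n then H ⊔ Z ((i : ℕ) + 1) else ⊤))
      by_cases hi : (i : ℕ) < n
      · -- middle step
        rw [if_pos (show (i : ℕ) + 1 ≤ n by omega)]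
        set Y := H ⊔ Z (i : ℕ) with hY
        set X := H ⊔ Z ((i : ℕ) + 1) with hX
        have hYX : Y ≤ X := sup_le_sup_left (hZmono _) H
        have hXYnorm : X ≤ Subgroup.normalizer (Y : Set G) := hchain (i : ℕ)
        refine ⟨hYX, ?_⟩
        refine isDnormal_right' (B' := B ⊓ Y) hss hYX inf_le_right ?_ ?_ ?_ ?_
        · intro p hp hd
          exact hBcard p hp (hd.trans (Subgroup.card_dvd_of_le inf_le_left))
        · intro p hp hd
          have e : (B ⊓ Y).relIndex Y = B.relIndex Y := by
            show ((B ⊓ Y).subgroupOf Y).index = (B.subgroupOf Y).index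
            rw [Subgroup.inf_subgroupOf_right]
          rw [e] at hd
          exact hBidx p hp (hd.trans (Subgroup.relIndex_dvd_index_of_normal B Y))
        · have h1 : X ≤ Subgroup.normalizer (B : Set G) ⊓ Subgroup.normalizer (Y : Set G) :=
            le_inf (by rw [Subgroup.normalizer_eq_top_iff.mpr hBnorm]; exact le_top) hXYnorm
          exact h1.trans inf_normalizer_le'
        · rw [Subgroup.normalizer_eq_top_iff.mpr
            (subgroupOf_normal_of_le_normalizer' hXYnorm)]
          exact le_top
      · -- last step
        have hieq : (i : ℕ) = n := le_antisymm hile (not_lt.mp hi)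
        rw [if_neg (by omega), hieq, hZn]
        refine ⟨le_top, ?_⟩
        refine isDnormal_right' (B' := B) hss le_top le_sup_right ?_ ?_ ?_ ?_
        · exact hBcard
        · intro p hp hd
          exact hBidx p hp (hd.trans (Subgroup.relIndex_dvd_index_of_normal B _))
        · rw [Subgroup.normalizer_eq_top_iff.mpr hBnorm]
        · refine le_trans (piResidual_le_subgroupOf' (X := ⊤) (B' := B)
            (by rw [Subgroup.normalizer_eq_top_iff.mpr hBnorm]) ?_) ?_
          · intro p hp hd
            rw [Subgroup.relIndex_top_right] at hd
            exact hBidx p hp hd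
          · refine le_trans ?_ Subgroup.le_normalizer
            intro x hx
            rw [Subgroup.mem_subgroupOf] at hx ⊢
            exact Subgroup.mem_sup_right hx
end

section
/- Let π be a set of primes and H an N^π-Dnormal subgroup of a finite group G. Then O^π(H) is normal in G and the image of H in the quotient G/O^π(H) is contained in O_π(G/O^π(H)), the largest normal π-subgroup of G/O^π(H). -/
section PiAuxHelpers
namespace PiAux

def IsPiNat (π : Set ℕ) (n : ℕ) : Prop := ∀ p : ℕ, p.Prime → p ∣ n → p ∈ π

theorem IsPiNat.of_dvd {π : Set ℕ} {m n : ℕ} (h : m ∣ n) (hn : IsPiNat π n) : IsPiNat π m :=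
  fun p hp hd => hn p hp (hd.trans h)

theorem IsPiNat.mul {π : Set ℕ} {m n : ℕ} (hm : IsPiNat π m) (hn : IsPiNat π n) :
    IsPiNat π (m * n) := fun p hp hd => ((Nat.Prime.dvd_mul hp).1 hd).elim (hm p hp) (hn p hp)

theorem isPiGroup_iff {π : Set ℕ} {G : Type*} [Group G] : IsPiGroup π G ↔ IsPiNat π (Nat.card G) :=
  Iff.rfl

-- finite lattice lemmas
theorem sInf_mem' {α : Type*} [CompleteLattice α] [Finite α] {S : Set α} (htop : (⊤:α) ∈ S)
    (hinf : ∀ a ∈ S, ∀ b ∈ S, a ⊓ b ∈ S) : sInf S ∈ S := by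
  have hfin : S.Finite := Set.toFinite S
  classical
  have key : ∀ t : Finset α, (∀ x ∈ t, x ∈ S) → t.inf id ∈ S := by
    intro t
    induction t using Finset.induction_on with
    | empty => intro _; simpa using htop
    | insert _ _ hni ih =>
      intro ht
      rw [Finset.inf_insert]
      exact hinf _ (ht _ (Finset.mem_insert_self _ _))
        _ (ih fun x hx => ht x (Finset.mem_insert_of_mem hx))
  have : sInf S = hfin.toFinset.inf id := by
    rw [Finset.inf_id_eq_sInf, hfin.coe_toFinset]
  rw [this]
  exact key _ fun x hx => hfin.mem_toFinset.1 hx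

theorem sSup_mem' {α : Type*} [CompleteLattice α] [Finite α] {S : Set α} (hbot : (⊥:α) ∈ S)
    (hsup : ∀ a ∈ S, ∀ b ∈ S, a ⊔ b ∈ S) : sSup S ∈ S := by
  have hfin : S.Finite := Set.toFinite S
  classical
  have key : ∀ t : Finset α, (∀ x ∈ t, x ∈ S) → t.sup id ∈ S := by
    intro t
    induction t using Finset.induction_on with
    | empty => intro _; simpa using hbot
    | insert _ _ hni ih =>
      intro ht
      rw [Finset.sup_insert]
      exact hsup _ (ht _ (Finset.mem_insert_self _ _))
        _ (ih fun x hx => ht x (Finset.mem_insert_of_mem hx))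
  have : sSup S = hfin.toFinset.sup id := by
    rw [Finset.sup_id_eq_sSup, hfin.coe_toFinset]
  rw [this]
  exact key _ fun x hx => hfin.mem_toFinset.1 hx

end PiAux

namespace PiAux
open Subgroup

variable {π : Set ℕ}

theorem normal_inf {G : Type*} [Group G] {A B : Subgroup G} (hA : A.Normal) (hB : B.Normal) :
    (A ⊓ B).Normal :=
  ⟨fun x hx g => ⟨hA.conj_mem x hx.1 g, hB.conj_mem x hx.2 g⟩⟩

theorem piResidual_eq_sInf (G : Type*) [Group G] :
    piResidual π G = sInf {N : Subgroup G | N.Normal ∧ IsPiNat π N.index} :=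
  (sInf_eq_iInf).symm

theorem piResidual_le {G : Type*} [Group G] {N : Subgroup G} (h1 : N.Normal)
    (h2 : IsPiNat π N.index) : piResidual π G ≤ N := by
  rw [piResidual_eq_sInf]; exact sInf_le ⟨h1, h2⟩

theorem piResidual_mem (G : Type*) [Group G] [Finite G] :
    (piResidual π G).Normal ∧ IsPiNat π (piResidual π G).index := by
  rw [piResidual_eq_sInf]
  show sInf _ ∈ {N : Subgroup G | N.Normal ∧ IsPiNat π N.index}
  apply sInf_mem'
  · refine ⟨inferInstance , ?_⟩
    · intro p hp hd
      rw [Subgroup.index_top] at hd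
      exact absurd (Nat.dvd_one.1 hd) hp.ne_one
  · rintro a ⟨ha1, ha2⟩ b ⟨hb1, hb2⟩
    refine ⟨normal_inf ha1 hb1, ?_⟩
    haveI := hb1
    have h1 : (a ⊓ b).relIndex a * a.index = (a ⊓ b).index := relIndex_mul_index inf_le_left
    have h2 : (a ⊓ b).relIndex a = b.relIndex a := by
      rw [inf_comm]; exact inf_relIndex_right b a
    have h3 : b.relIndex a ∣ b.index := relIndex_dvd_index_of_normal b a
    have : (a ⊓ b).index ∣ b.index * a.index := by
      rw [← h1, h2]
      exact mul_dvd_mul_right h3 _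
    exact IsPiNat.of_dvd this (IsPiNat.mul hb2 ha2)

theorem piResidual_normal (G : Type*) [Group G] : (piResidual π G).Normal := by
  rw [piResidual_eq_sInf]
  constructor
  intro x hx g
  rw [Subgroup.mem_sInf] at *
  exact fun N hN => hN.1.conj_mem x (hx N hN) g

theorem piResidual_index (G : Type*) [Group G] [Finite G] :
    IsPiNat π (piResidual π G).index := (piResidual_mem G).2

theorem piCore_eq_sSup (G : Type*) [Group G] :
    piCore π G = sSup {N : Subgroup G | N.Normal ∧ IsPiGroup π N} :=
  (sSup_eq_iSup).symm

theorem le_piCore {G : Type*} [Group G] {N : Subgroup G} (h1 : N.Normal)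
    (h2 : IsPiGroup π N) : N ≤ piCore π G := by
  rw [piCore_eq_sSup]; exact le_sSup ⟨h1, h2⟩

end PiAux

namespace PiAux
open Subgroup

variable {π : Set ℕ}

theorem normal_sup {G : Type*} [Group G] {A B : Subgroup G} (hA : A.Normal) (hB : B.Normal) :
    (A ⊔ B).Normal := by
  haveI := hA; haveI := hB
  infer_instance

theorem card_sup_dvd {G : Type*} [Group G] [Finite G] {A B : Subgroup G} (hB : B.Normal) :
    Nat.card (A ⊔ B : Subgroup G) ∣ Nat.card A * Nat.card B := by
  haveI := hB
  have e1 := QuotientGroup.quotientInfEquivProdNormalQuotient A B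
  have h1 : Nat.card (A ⊔ B : Subgroup G) =
      Nat.card ((A ⊔ B : Subgroup G) ⧸ B.subgroupOf (A ⊔ B)) * Nat.card (B.subgroupOf (A ⊔ B)) :=
    Subgroup.card_eq_card_quotient_mul_card_subgroup _
  have h2 : Nat.card ((A ⊔ B : Subgroup G) ⧸ B.subgroupOf (A ⊔ B)) =
      Nat.card ((A : Subgroup G) ⧸ B.subgroupOf A) := (Nat.card_congr e1.toEquiv).symm
  have h3 : Nat.card ((A : Subgroup G) ⧸ B.subgroupOf A) ∣ Nat.card A := by
    have := Subgroup.card_eq_card_quotient_mul_card_subgroup (α := A) (B.subgroupOf A)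
    exact Dvd.intro _ this.symm
  have h4 : Nat.card (B.subgroupOf (A ⊔ B)) = Nat.card B :=
    Nat.card_congr (Subgroup.subgroupOfEquivOfLe le_sup_right).toEquiv
  rw [h1, h2, h4]
  exact mul_dvd_mul h3 dvd_rfl

theorem piCore_mem (G : Type*) [Group G] [Finite G] :
    (piCore π G).Normal ∧ IsPiGroup π (piCore π G) := by
  rw [piCore_eq_sSup]
  show sSup _ ∈ {N : Subgroup G | N.Normal ∧ IsPiGroup π N}
  apply sSup_mem'
  · refine ⟨inferInstance, ?_⟩
    intro p hp hd
    rw [show Nat.card (⊥ : Subgroup G) = 1 from Subgroup.card_bot] at hd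
    exact absurd (Nat.dvd_one.1 hd) hp.ne_one
  · rintro a ⟨ha1, ha2⟩ b ⟨hb1, hb2⟩
    refine ⟨normal_sup ha1 hb1, ?_⟩
    rw [isPiGroup_iff] at *
    exact IsPiNat.of_dvd (card_sup_dvd hb1) (IsPiNat.mul ha2 hb2)

theorem piCore_normal (G : Type*) [Group G] [Finite G] : (piCore π G).Normal := (piCore_mem G).1
theorem piCore_pi (G : Type*) [Group G] [Finite G] : IsPiGroup π (piCore π G) := (piCore_mem G).2

end PiAux

namespace PiAux
open Subgroup

variable {π : Set ℕ}

section Equiv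
variable {G G' : Type*} [Group G] [Group G'] (e : G ≃* G')

theorem card_map_equiv (H : Subgroup G) :
    Nat.card (H.map e.toMonoidHom) = Nat.card H :=
  (Nat.card_congr (e.subgroupMap H).toEquiv).symm

theorem index_map_equiv (H : Subgroup G) : (H.map e.toMonoidHom).index = H.index := by
  rw [Subgroup.index_map]
  have h1 : e.toMonoidHom.ker = ⊥ := e.toMonoidHom.ker_eq_bot_iff.2 e.injective
  have h2 : e.toMonoidHom.range = ⊤ := e.toMonoidHom.range_eq_top_of_surjective e.surjective
  rw [h1, h2, sup_bot_eq, Subgroup.index_top, mul_one]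

theorem normal_map_equiv {H : Subgroup G} (hH : H.Normal) : (H.map e.toMonoidHom).Normal :=
  hH.map _ e.surjective

theorem map_map_symm (H : Subgroup G') :
    (H.map e.symm.toMonoidHom).map e.toMonoidHom = H := by
  rw [Subgroup.map_map]
  have : e.toMonoidHom.comp e.symm.toMonoidHom = MonoidHom.id G' := by
    ext x; simp
  rw [this, Subgroup.map_id]

theorem piResidual_map_equiv [Finite G] : (piResidual π G).map e.toMonoidHom = piResidual π G' := by
  haveI : Finite G' := Finite.of_equiv G e.toEquiv
  apply le_antisymm
  · rw [piResidual_eq_sInf G']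
    apply le_sInf
    rintro N' ⟨h1, h2⟩
    have h3 : piResidual π G ≤ N'.map e.symm.toMonoidHom :=
      piResidual_le (normal_map_equiv e.symm h1) (by rw [index_map_equiv]; exact h2)
    calc (piResidual π G).map e.toMonoidHom
        ≤ (N'.map e.symm.toMonoidHom).map e.toMonoidHom := Subgroup.map_mono h3
      _ = N' := map_map_symm e N'
  · exact piResidual_le (normal_map_equiv e (piResidual_normal G))
      (by rw [index_map_equiv]; exact piResidual_index G)

theorem piCore_map_equiv [Finite G] : (piCore π G).map e.toMonoidHom = piCore π G' := by
  haveI : Finite G' := Finite.of_equiv G e.toEquiv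
  apply le_antisymm
  · apply le_piCore (normal_map_equiv e (piCore_normal G))
    rw [isPiGroup_iff, card_map_equiv]
    exact piCore_pi G
  · rw [← map_map_symm e (piCore π G')]
    apply Subgroup.map_mono
    apply le_piCore (normal_map_equiv e.symm (piCore_normal G'))
    rw [isPiGroup_iff, card_map_equiv]
    exact piCore_pi G'

end Equiv
end PiAux

namespace PiAux
open Subgroup

variable {π : Set ℕ}

def conjEquiv {X : Type*} [Group X] {K : Subgroup X} (hK : K.Normal) (g : X) : ↥K ≃* ↥K where
  toFun x := ⟨g * x * g⁻¹, hK.conj_mem x x.2 g⟩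
  invFun x := ⟨g⁻¹ * x * g, by simpa using hK.conj_mem x x.2 g⁻¹⟩
  left_inv x := by ext; simp [mul_assoc]
  right_inv x := by ext; simp [mul_assoc]
  map_mul' x y := by ext; simp [mul_assoc]

theorem subtype_comp_conjEquiv {X : Type*} [Group X] {K : Subgroup X} (hK : K.Normal) (g : X) :
    K.subtype.comp (conjEquiv hK g).toMonoidHom =
      ((MulAut.conj g).toMonoidHom).comp K.subtype := by
  ext x; rfl

theorem map_subtype_conj {X : Type*} [Group X] {K : Subgroup X} (hK : K.Normal) (g : X)
    (S : Subgroup ↥K) :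
    (S.map K.subtype).map (MulAut.conj g).toMonoidHom =
      (S.map (conjEquiv hK g).toMonoidHom).map K.subtype := by
  rw [Subgroup.map_map, Subgroup.map_map, subtype_comp_conjEquiv]

theorem conj_mem_of_maps_to {X : Type*} [Group X] {P : Subgroup X}
    (h : ∀ g : X, P.map (MulAut.conj g).toMonoidHom = P) : P.Normal := by
  constructor
  intro x hx g
  rw [← h g]
  exact ⟨x, hx, rfl⟩

theorem normal_map_subtype_piCore {X : Type*} [Group X] [Finite X] {K : Subgroup X}
    (hK : K.Normal) : ((piCore π ↥K).map K.subtype).Normal := by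
  apply conj_mem_of_maps_to
  intro g
  rw [map_subtype_conj hK g, piCore_map_equiv (conjEquiv hK g)]

theorem normal_piResidualIn {G : Type*} [Group G] [Finite G] {H : Subgroup G}
    (hH : H.Normal) : (piResidualIn π H).Normal := by
  apply conj_mem_of_maps_to
  intro g
  show ((piResidual π ↥H).map H.subtype).map (MulAut.conj g).toMonoidHom = _
  rw [map_subtype_conj hH g, piResidual_map_equiv (conjEquiv hH g)]
  rfl

end PiAux

namespace PiAux
open Subgroup

variable {π : Set ℕ}

theorem card_map_dvd {G G' : Type*} [Group G] [Group G'] (f : G →* G') (H : Subgroup G) :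
    Nat.card (H.map f) ∣ Nat.card H := by
  have h1 : (f.comp H.subtype).range = H.map f := by
    rw [MonoidHom.range_comp, Subgroup.range_subtype]
  have h2 : Nat.card (H.map f) = Nat.card (↥H ⧸ (f.comp H.subtype).ker) := by
    rw [← h1]
    exact (Nat.card_congr (QuotientGroup.quotientKerEquivRange _).toEquiv).symm
  rw [h2, Subgroup.card_eq_card_quotient_mul_card_subgroup (f.comp H.subtype).ker]
  exact dvd_mul_right _ _

theorem index_map_dvd_of_surjective {G G' : Type*} [Group G] [Group G'] {f : G →* G'}
    (hf : Function.Surjective f) (H : Subgroup G) : (H.map f).index ∣ H.index := by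
  rw [Subgroup.index_map, f.range_eq_top_of_surjective hf, Subgroup.index_top, mul_one]
  exact Subgroup.index_dvd_of_le le_sup_left

theorem piResidual_le_map {G G' : Type*} [Group G] [Group G'] [Finite G] {f : G →* G'}
    (hf : Function.Surjective f) : piResidual π G' ≤ (piResidual π G).map f :=
  piResidual_le ((piResidual_normal G).map f hf)
    (IsPiNat.of_dvd (index_map_dvd_of_surjective hf _) (piResidual_index G))

theorem map_normalizer_le {G G' : Type*} [Group G] [Group G'] (f : G →* G')
    (H : Subgroup G) : (Subgroup.normalizer (H : Set G)).map f ≤ Subgroup.normalizer ((H.map f : Subgroup G') : Set G') := by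
  rintro _ ⟨n, hn, rfl⟩
  rw [Subgroup.mem_normalizer_iff]
  intro y
  constructor
  · rintro ⟨h, hh, rfl⟩
    exact ⟨n * h * n⁻¹, (Subgroup.mem_normalizer_iff.1 hn h).1 hh, by simp⟩
  · rintro ⟨h', hh', heq⟩
    have hy : y = f (n⁻¹ * h' * n) := by
      have : f h' = f n * y * (f n)⁻¹ := heq
      simp [this, mul_assoc]
    rw [hy]
    refine ⟨n⁻¹ * h' * n, ?_, rfl⟩
    have := (Subgroup.mem_normalizer_iff.1 hn (n⁻¹ * h' * n)).2
    apply this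
    simpa [mul_assoc] using hh'

theorem piResidual_quot_le_normalizer {G : Type*} [Group G] [Finite G] {A R : Subgroup G}
    (hR : R.Normal) (hN : piResidual π G ≤ Subgroup.normalizer (A : Set G)) :
    letI := hR
    piResidual π (G ⧸ R) ≤ Subgroup.normalizer ((A.map (QuotientGroup.mk' R) : Subgroup (G ⧸ R)) : Set (G ⧸ R)) := by
  letI := hR
  refine (piResidual_le_map (QuotientGroup.mk'_surjective R)).trans ?_
  refine le_trans (Subgroup.map_mono hN) ?_
  exact map_normalizer_le _ A

end PiAux

namespace PiAux
open Subgroup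

variable {π : Set ℕ}

theorem ker_le_comap' {X : Type*} [Group X] (P : Subgroup X) [hP : P.Normal]
    (Q : Subgroup (X ⧸ P)) : P ≤ Q.comap (QuotientGroup.mk' P) := by
  intro x hx
  show QuotientGroup.mk' P x ∈ Q
  have : QuotientGroup.mk' P x = 1 := (QuotientGroup.eq_one_iff x).2 hx
  rw [this]; exact Q.one_mem

theorem comap_mk'_facts {X : Type*} [Group X] (P : Subgroup X) [hP : P.Normal]
    (Q : Subgroup (X ⧸ P)) :
    (P.subgroupOf (Q.comap (QuotientGroup.mk' P))).index = Nat.card Q ∧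
    Nat.card (Q.comap (QuotientGroup.mk' P)) = Nat.card Q * Nat.card P := by
  set V := Q.comap (QuotientGroup.mk' P) with hV
  set f : ↥V →* X ⧸ P := (QuotientGroup.mk' P).comp V.subtype with hf
  have hker : f.ker = P.subgroupOf V := by
    ext x
    simp only [hf, MonoidHom.mem_ker, MonoidHom.comp_apply, Subgroup.mem_subgroupOf,
      Subgroup.coe_subtype]
    exact QuotientGroup.eq_one_iff _
  have hrange : f.range = Q := by
    rw [hf, MonoidHom.range_comp, Subgroup.range_subtype, hV,
      Subgroup.map_comap_eq_self_of_surjective (QuotientGroup.mk'_surjective P)]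
  have hq : Nat.card (↥V ⧸ f.ker) = Nat.card Q := by
    rw [← hrange]; exact Nat.card_congr (QuotientGroup.quotientKerEquivRange f).toEquiv
  have hPV : Nat.card (P.subgroupOf V) = Nat.card P :=
    Nat.card_congr (Subgroup.subgroupOfEquivOfLe (ker_le_comap' P Q)).toEquiv
  constructor
  · rw [← hker, Subgroup.index_eq_card]
    exact hq
  · have h := Subgroup.card_eq_card_quotient_mul_card_subgroup (α := ↥V) f.ker
    rw [hq, hker, hPV] at h
    exact h

end PiAux

namespace PiAux
open Subgroup

universe u

theorem lemW (π : Set ℕ) : ∀ (n : ℕ) (X : Type u) [Group X] [Finite X], Nat.card X ≤ n →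
    ∀ A : Subgroup X, IsPiGroup π ↥A → piResidual π X ≤ Subgroup.normalizer (A : Set X) → A ≤ piCore π X := by
  intro n
  induction n with
  | zero =>
    intro X _ _ h
    have : 0 < Nat.card X := Nat.card_pos
    omega
  | succ n ih =>
    intro X _ _ hXcard A hA hN
    -- Claim C1 : π-subgroups with proper normal closure normalized by the residual lie in the core
    have C1 : ∀ B : Subgroup X, IsPiGroup π ↥B → piResidual π X ≤ Subgroup.normalizer (B : Set X) →
        Subgroup.normalClosure (B : Set X) ≠ ⊤ → B ≤ piCore π X := by
      intro B hB hNB hKT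
      set K := Subgroup.normalClosure (B : Set X) with hKdef
      haveI hKn : K.Normal := Subgroup.normalClosure_normal
      have hBK : B ≤ K := Subgroup.le_normalClosure
      have hcardK : Nat.card ↥K ≤ n := by
        have hdvd : Nat.card ↥K ∣ Nat.card X := by
          have := Subgroup.card_dvd_of_le (le_top : K ≤ ⊤)
          rwa [Subgroup.card_top] at this
        have hne : Nat.card ↥K ≠ Nat.card X := fun h => hKT (Subgroup.eq_top_of_card_eq K h)
        have hpos : 0 < Nat.card X := Nat.card_pos
        have := Nat.le_of_dvd hpos hdvd
        omega
      have hB' : IsPiGroup π ↥(B.subgroupOf K) := by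
        rw [isPiGroup_iff, Nat.card_congr (Subgroup.subgroupOfEquivOfLe hBK).toEquiv]
        exact hB
      have hres : piResidual π ↥K ≤ Subgroup.normalizer ((B.subgroupOf K : Subgroup ↥K) : Set ↥K) := by
        haveI := piResidual_normal (π := π) X
        have h1 : piResidual π ↥K ≤ (piResidual π X).subgroupOf K := by
          apply piResidual_le ((piResidual_normal X).subgroupOf K)
          exact IsPiNat.of_dvd (Subgroup.relIndex_dvd_index_of_normal _ K) (piResidual_index X)
        refine h1.trans ?_
        intro x hx
        rw [Subgroup.mem_normalizer_iff]
        intro h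
        rw [Subgroup.mem_subgroupOf] at hx
        have hiff := Subgroup.mem_normalizer_iff.1 (hNB hx) (h : X)
        simp only [Subgroup.mem_subgroupOf]
        simpa using hiff
      have hmain := ih ↥K hcardK (B.subgroupOf K) hB' hres
      have hBP : B ≤ (piCore π ↥K).map K.subtype := by
        intro b hb
        exact ⟨⟨b, hBK hb⟩, hmain (by rwa [Subgroup.mem_subgroupOf]), rfl⟩
      refine hBP.trans (le_piCore (normal_map_subtype_piCore hKn) ?_)
      rw [isPiGroup_iff]
      have hcc : Nat.card ((piCore π ↥K).map K.subtype) = Nat.card (piCore π ↥K) :=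
        (Nat.card_congr (Subgroup.equivMapOfInjective _ _ (Subgroup.subtype_injective K)).toEquiv).symm
      rw [hcc]
      exact piCore_pi ↥K
    by_cases hK : Subgroup.normalClosure (A : Set X) = ⊤
    swap
    · exact C1 A hA hN hK
    by_cases hXpi : IsPiGroup π X
    · have htop : (⊤ : Subgroup X) ≤ piCore π X := by
        apply le_piCore inferInstance
        rw [isPiGroup_iff, Subgroup.card_top]
        exact hXpi
      exact le_top.trans htop
    by_cases hAnorm : A.Normal
    · exact le_piCore hAnorm hA
    by_cases hPbot : piCore π X = ⊥
    swap
    · -- quotient by the core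
      set P := piCore π X with hPdef
      haveI hPn : P.Normal := piCore_normal X
      have hcardq : Nat.card (X ⧸ P) ≤ n := by
        have h1 : Nat.card X = Nat.card (X ⧸ P) * Nat.card P :=
          Subgroup.card_eq_card_quotient_mul_card_subgroup P
        have h2 : 1 < Nat.card P := (Subgroup.one_lt_card_iff_ne_bot P).2 hPbot
        have h3 : 0 < Nat.card (X ⧸ P) := Nat.card_pos
        have h4 : Nat.card (X ⧸ P) * 2 ≤ Nat.card (X ⧸ P) * Nat.card P :=
          Nat.mul_le_mul_left _ h2
        omega
      have hApi : IsPiGroup π ↥(A.map (QuotientGroup.mk' P)) := by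
        rw [isPiGroup_iff]; exact IsPiNat.of_dvd (card_map_dvd _ A) hA
      have hAres := piResidual_quot_le_normalizer (π := π) hPn hN
      have h3 := ih (X ⧸ P) hcardq _ hApi hAres
      set Q := piCore π (X ⧸ P) with hQdef
      have hAV : A ≤ Q.comap (QuotientGroup.mk' P) := fun a ha => h3 ⟨a, ha, rfl⟩
      refine hAV.trans (le_piCore ((piCore_normal (X ⧸ P)).comap _) ?_)
      rw [isPiGroup_iff, (comap_mk'_facts P Q).2]
      exact IsPiNat.mul (piCore_pi (X ⧸ P)) (piCore_pi X)
    · -- piCore = ⊥ : hard case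
      have hNbot : piResidual π X ≠ ⊥ := by
        intro h
        apply hXpi
        rw [isPiGroup_iff]
        have hidx := piResidual_index (π := π) X
        rwa [h, Subgroup.index_bot] at hidx
      haveI hNn : (piResidual π X).Normal := piResidual_normal X
      set SN : Set (Subgroup X) := {Q | Q.Normal ∧ Q ≠ ⊥ ∧ Q ≤ piResidual π X} with hSN
      have hSNfin : SN.Finite := Set.toFinite _
      have hSNne : SN.Nonempty := ⟨piResidual π X, hNn, hNbot, le_rfl⟩
      obtain ⟨M, hMmem, hMmin⟩ := hSNfin.toFinset.exists_minimal
        (by rwa [Set.Finite.toFinset_nonempty])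
      rw [Set.Finite.mem_toFinset] at hMmem
      obtain ⟨hMn, hMne, hMle⟩ := hMmem
      haveI := hMn
      have hMmin' : ∀ Q ∈ SN, Q ≤ M → Q = M := by
        intro Q hQ hle
        by_contra hne
        exact hne (le_antisymm hle (hMmin (hSNfin.mem_toFinset.2 hQ) hle))
      have hMT : M ≠ ⊤ := by
        intro h
        apply hAnorm
        rw [← Subgroup.normalizer_eq_top_iff]
        have h1 : piResidual π X = ⊤ := le_antisymm le_top (h ▸ hMle)
        exact le_antisymm le_top (h1 ▸ hN)
      have hMnotpi : ¬ IsPiGroup π ↥M := by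
        intro h
        exact hMne (le_bot_iff.1 (hPbot ▸ le_piCore hMn h))
      obtain ⟨p, hp, hpdvd, hpnot⟩ : ∃ p, p.Prime ∧ p ∣ Nat.card ↥M ∧ p ∉ π := by
        by_contra h
        push_neg at h
        exact hMnotpi fun p hp hd => h p hp hd
      haveI : Fact p.Prime := ⟨hp⟩
      -- A ⊓ M = ⊥
      have hAM : A ⊓ M = ⊥ := by
        have h1 : IsPiGroup π ↥(A ⊓ M) := by
          rw [isPiGroup_iff]
          exact IsPiNat.of_dvd (Subgroup.card_dvd_of_le inf_le_left) hA
        have h2 : piResidual π X ≤ Subgroup.normalizer ((A ⊓ M : Subgroup X) : Set X) := by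
          intro x hx
          rw [Subgroup.mem_normalizer_iff]
          intro h
          have hA' := Subgroup.mem_normalizer_iff.1 (hN hx) h
          constructor
          · rintro ⟨ha, hm⟩
            exact ⟨hA'.1 ha, hMn.conj_mem _ hm x⟩
          · rintro ⟨ha, hm⟩
            refine ⟨hA'.2 ha, ?_⟩
            have := hMn.conj_mem _ hm x⁻¹
            simpa [mul_assoc] using this
        have h3 : Subgroup.normalClosure ((A ⊓ M : Subgroup X) : Set X) ≠ ⊤ := by
          intro h
          apply hMT
          have hle : Subgroup.normalClosure ((A ⊓ M : Subgroup X) : Set X) ≤ M :=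
            Subgroup.normalClosure_le_normal (fun x hx => hx.2)
          rw [h] at hle
          exact top_le_iff.1 hle
        have := C1 _ h1 h2 h3
        rwa [hPbot, le_bot_iff] at this
      -- commuting
      have hcomm : ∀ a ∈ A, ∀ m ∈ M, a * m = m * a := by
        intro a ha m hm
        have hmN : m ∈ piResidual π X := hMle hm
        have h1 : m * a * m⁻¹ ∈ A := (Subgroup.mem_normalizer_iff.1 (hN hmN) a).1 ha
        have hc : m * a * m⁻¹ * a⁻¹ ∈ A ⊓ M := by
          constructor
          · exact A.mul_mem h1 (A.inv_mem ha)
          · have h2 : a * m⁻¹ * a⁻¹ ∈ M := hMn.conj_mem _ (M.inv_mem hm) a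
            have h4 : m * (a * m⁻¹ * a⁻¹) ∈ M := M.mul_mem hm h2
            simpa [mul_assoc] using h4
        rw [hAM, Subgroup.mem_bot] at hc
        have h5 : m * a * m⁻¹ = a := by
          have := mul_inv_eq_one.1 hc
          simpa using this
        have h6 := congrArg (· * m) h5
        simp only [inv_mul_cancel_right] at h6
        exact h6.symm
      -- M is central
      have hC : Subgroup.centralizer (M : Set X) = ⊤ := by
        have hCn : (Subgroup.centralizer (M : Set X)).Normal := by
          constructor
          intro c hc g
          rw [Subgroup.mem_centralizer_iff] at hc ⊢
          intro m hm
          have hm' : g⁻¹ * m * g ∈ M := by simpa using hMn.conj_mem _ hm g⁻¹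
          have hcm := hc _ hm'
          calc m * (g * c * g⁻¹) = g * ((g⁻¹ * m * g) * c) * g⁻¹ := by group
            _ = g * (c * (g⁻¹ * m * g)) * g⁻¹ := by rw [hcm]
            _ = (g * c * g⁻¹) * m := by group
        haveI := hCn
        have hsub : A ≤ Subgroup.centralizer (M : Set X) := by
          intro a ha
          rw [Subgroup.mem_centralizer_iff]
          intro m hm
          exact (hcomm a ha m hm).symm
        exact eq_top_iff.2 (hK ▸ Subgroup.normalClosure_le_normal hsub)
      have hMZ : M ≤ Subgroup.center X := by
        intro m hm
        rw [Subgroup.mem_center_iff]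
        intro g
        have hg : g ∈ Subgroup.centralizer (M : Set X) := hC ▸ Subgroup.mem_top g
        exact (Subgroup.mem_centralizer_iff.1 hg m hm).symm
      -- M is an (elementary abelian) p-group
      have hMp : ∀ x ∈ M, x ^ p = 1 := by
        set Mp : Subgroup X :=
          { carrier := {x | x ∈ M ∧ x ^ p = 1}
            one_mem' := ⟨M.one_mem, one_pow p⟩
            mul_mem' := by
              rintro x y ⟨hx1, hx2⟩ ⟨hy1, hy2⟩
              refine ⟨M.mul_mem hx1 hy1, ?_⟩
              have hcxy : Commute x y := (Subgroup.mem_center_iff.1 (hMZ hx1) y).symm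
              rw [hcxy.mul_pow, hx2, hy2, one_mul]
            inv_mem' := by
              rintro x ⟨hx1, hx2⟩
              exact ⟨M.inv_mem hx1, by rw [inv_pow, hx2, inv_one]⟩ } with hMpdef
        have hMpn : Mp.Normal := by
          constructor
          intro x hx g
          have hxc := Subgroup.mem_center_iff.1 (hMZ hx.1) g
          have hgx : g * x * g⁻¹ = x := by rw [hxc, mul_inv_cancel_right]
          rw [hgx]
          exact hx
        obtain ⟨x, hx⟩ : ∃ x : ↥M, orderOf x = p := by
          haveI : Fintype ↥M := Fintype.ofFinite ↥M
          exact exists_prime_orderOf_dvd_card p (by rwa [← Nat.card_eq_fintype_card])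
        have hMpne : Mp ≠ ⊥ := by
          intro h
          have hxord : orderOf (x : X) = p := by rw [Subgroup.orderOf_coe]; exact hx
          have hxmem : (x : X) ∈ Mp := by
            refine ⟨x.2, ?_⟩
            rw [← hxord, pow_orderOf_eq_one]
          rw [h, Subgroup.mem_bot] at hxmem
          rw [hxmem, orderOf_one] at hxord
          exact hp.ne_one hxord.symm
        have hMpM : Mp = M :=
          hMmin' Mp ⟨hMpn, hMpne, le_trans (fun x hx => hx.1) hMle⟩ (fun x hx => hx.1)
        intro y hy
        have : y ∈ Mp := hMpM.symm ▸ hy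
        exact this.2
      have hMcard : ∃ k, Nat.card ↥M = p ^ k := by
        have hpg : IsPGroup p ↥M := by
          intro g
          refine ⟨1, ?_⟩
          ext
          rw [pow_one, Subgroup.coe_pow]
          simpa using hMp (g : X) g.2
        exact hpg.exists_card_eq
      obtain ⟨k, hk⟩ := hMcard
      -- induction in the quotient X ⧸ M
      have hcardq : Nat.card (X ⧸ M) ≤ n := by
        have h1 : Nat.card X = Nat.card (X ⧸ M) * Nat.card M :=
          Subgroup.card_eq_card_quotient_mul_card_subgroup M
        have h2 : 1 < Nat.card M := (Subgroup.one_lt_card_iff_ne_bot M).2 hMne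
        have h3 : 0 < Nat.card (X ⧸ M) := Nat.card_pos
        have h4 : Nat.card (X ⧸ M) * 2 ≤ Nat.card (X ⧸ M) * Nat.card M :=
          Nat.mul_le_mul_left _ h2
        omega
      have hApi : IsPiGroup π ↥(A.map (QuotientGroup.mk' M)) := by
        rw [isPiGroup_iff]; exact IsPiNat.of_dvd (card_map_dvd _ A) hA
      have hAres := piResidual_quot_le_normalizer (π := π) hMn hN
      have h3 := ih (X ⧸ M) hcardq _ hApi hAres
      set Qb := piCore π (X ⧸ M) with hQb
      set V := Qb.comap (QuotientGroup.mk' M) with hVdef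
      have hAV : A ≤ V := fun a ha => h3 ⟨a, ha, rfl⟩
      haveI hVn : V.Normal := (piCore_normal _).comap _
      have hMV : M ≤ V := ker_le_comap' M Qb
      obtain ⟨hidx, hcardV⟩ := comap_mk'_facts M Qb
      haveI : (M.subgroupOf V).Normal := hMn.subgroupOf V
      have hcardM' : Nat.card (M.subgroupOf V) = Nat.card ↥M :=
        Nat.card_congr (Subgroup.subgroupOfEquivOfLe hMV).toEquiv
      have hQbpi : IsPiNat π (Nat.card ↥Qb) := piCore_pi (X ⧸ M)
      have hcop : (Nat.card (M.subgroupOf V)).Coprime (M.subgroupOf V).index := by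
        rw [hcardM', hidx, hk]
        apply Nat.Coprime.pow_left
        rw [hp.coprime_iff_not_dvd]
        intro hdvd
        exact hpnot (hQbpi p hp hdvd)
      obtain ⟨W, hW⟩ := Subgroup.exists_right_complement'_of_coprime hcop
      -- W is normal in V since M is central
      have hMcentral : ∀ m : ↥V, (m : X) ∈ M → ∀ w : ↥V, m * w = w * m := by
        intro m hm w
        ext
        push_cast
        exact (Subgroup.mem_center_iff.1 (hMZ hm) (w : X)).symm
      have hWn : W.Normal := by
        constructor
        intro w hw v
        obtain ⟨⟨m, w'⟩, hmw, -⟩ := hW.existsUnique v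
        have hmc : ∀ z : ↥V, (↑m : ↥V) * z = z * ↑m :=
          fun z => hMcentral ↑m (Subgroup.mem_subgroupOf.1 m.2) z
        have hvm : v = ↑m * ↑w' := hmw.symm
        have hconj : v * w * v⁻¹ = ↑w' * w * (↑w' : ↥V)⁻¹ := by
          rw [hvm, mul_inv_rev]
          have h1 : (↑m : ↥V) * (↑w' * w * (↑w')⁻¹) = (↑w' * w * (↑w')⁻¹) * ↑m := hmc _
          calc (↑m : ↥V) * ↑w' * w * ((↑w')⁻¹ * (↑m)⁻¹)
              = ↑m * (↑w' * w * (↑w')⁻¹) * (↑m)⁻¹ := by group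
            _ = (↑w' * w * (↑w')⁻¹) * ↑m * (↑m)⁻¹ := by rw [h1]
            _ = ↑w' * w * (↑w')⁻¹ := by group
        rw [hconj]
        exact W.mul_mem (W.mul_mem w'.2 hw) (W.inv_mem w'.2)
      haveI := hWn
      have hcardW : Nat.card ↥W = Nat.card ↥Qb := by
        have h1 := hW.symm.index_eq_card
        rw [← h1, hidx]
      have hWpi : IsPiNat π (Nat.card ↥W) := by rw [hcardW]; exact hQbpi
      set W' := W.map V.subtype with hW'def
      have hchar : ∀ x : X, x ∈ W' ↔ ∃ _ : x ∈ V, ¬ p ∣ orderOf x := by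
        intro x
        constructor
        · rintro ⟨w, hw, rfl⟩
          refine ⟨w.2, ?_⟩
          intro hpdvd
          have h1 : orderOf (V.subtype w) = orderOf w :=
            orderOf_injective V.subtype (Subgroup.subtype_injective V) w
          have h2 : orderOf w ∣ Nat.card ↥W := Subgroup.orderOf_dvd_natCard W hw
          exact hpnot (hWpi p hp ((h1 ▸ hpdvd).trans h2))
        · rintro ⟨hxV, hord⟩
          set ξ : ↥V := ⟨x, hxV⟩ with hξ
          have h1 : orderOf ((QuotientGroup.mk' W) ξ) ∣ orderOf ξ := orderOf_map_dvd _ _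
          have h2 : orderOf ((QuotientGroup.mk' W) ξ) ∣ Nat.card (↥V ⧸ W) :=
            _root_.orderOf_dvd_natCard _
          have hWidx : Nat.card (↥V ⧸ W) = p ^ k := by
            rw [← Subgroup.index_eq_card, hW.index_eq_card, hcardM', hk]
          have hordx : orderOf ξ = orderOf x := (Subgroup.orderOf_coe ξ).symm
          have hcop2 : Nat.Coprime (p ^ k) (orderOf ξ) := by
            apply Nat.Coprime.pow_left
            rw [hp.coprime_iff_not_dvd, hordx]
            exact hord
          have h4 : orderOf ((QuotientGroup.mk' W) ξ) = 1 :=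
            Nat.dvd_one.1 (hcop2 ▸ Nat.dvd_gcd (hWidx ▸ h2) h1)
          have h5 : (QuotientGroup.mk' W) ξ = 1 := orderOf_eq_one_iff.1 h4
          have h6 : ξ ∈ W := (QuotientGroup.eq_one_iff ξ).1 h5
          exact ⟨ξ, h6, rfl⟩
      have hW'n : W'.Normal := by
        constructor
        intro x hx g
        rw [hchar] at hx ⊢
        obtain ⟨hxV, hord⟩ := hx
        refine ⟨hVn.conj_mem x hxV g, ?_⟩
        have horde : orderOf (g * x * g⁻¹) = orderOf x := by
          have h1 := orderOf_injective (MulAut.conj g).toMonoidHom (MulAut.conj g).injective x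
          simpa using h1
        rwa [horde]
      have hAW' : A ≤ W' := by
        intro a ha
        rw [hchar]
        refine ⟨hAV ha, ?_⟩
        intro hpd
        have h1 : orderOf a ∣ Nat.card ↥A := Subgroup.orderOf_dvd_natCard A ha
        exact hpnot (hA p hp (hpd.trans h1))
      refine hAW'.trans (le_piCore hW'n ?_)
      rw [isPiGroup_iff]
      have hcc : Nat.card ↥W' = Nat.card ↥W :=
        (Nat.card_congr (Subgroup.equivMapOfInjective _ _ (Subgroup.subtype_injective V)).toEquiv).symm
      rw [hcc]
      exact hWpi

end PiAux

open PiAux in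
/-- Lemma 1.5(1): if `H` is `N^π`-Dnormal in `G`, then `O^π(H) ⊴ G` and
`H/O^π(H) ≤ O_π(G/O^π(H))`. -/
theorem dnormal_image_le_piCore (π : Set ℕ) (hπ : ∀ p ∈ π, p.Prime)
    (G : Type*) [Group G] [Finite G] (H : Subgroup G)
    (h : IsDnormal π H) :
    ∃ hn : (piResidualIn π H).Normal,
      letI := hn
      H.map (QuotientGroup.mk' (piResidualIn π H)) ≤ piCore π (G ⧸ piResidualIn π H) := by

  have hcardim : ∀ hn : (piResidualIn π H).Normal,
      letI := hn
      IsPiGroup π ↥(H.map (QuotientGroup.mk' (piResidualIn π H))) := by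
    intro hn
    letI := hn
    set R := piResidualIn π H with hR
    set f := (QuotientGroup.mk' R).comp H.subtype with hf
    have hrange : f.range = H.map (QuotientGroup.mk' R) := by
      rw [hf, MonoidHom.range_comp, Subgroup.range_subtype]
    have hker : f.ker = piResidual π ↥H := by
      ext x
      simp only [hf, MonoidHom.mem_ker, MonoidHom.comp_apply]
      rw [show ((QuotientGroup.mk' R) (H.subtype x) = 1) ↔ (H.subtype x ∈ R) from
        QuotientGroup.eq_one_iff _]
      constructor
      · rintro ⟨y, hy, hxy⟩
        rwa [← Subgroup.subtype_injective H hxy]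
      · intro hx; exact ⟨x, hx, rfl⟩
    rw [isPiGroup_iff]
    have h1 : Nat.card ↥(H.map (QuotientGroup.mk' R)) = Nat.card (↥H ⧸ piResidual π ↥H) := by
      rw [← hrange, ← hker]
      exact (Nat.card_congr (QuotientGroup.quotientKerEquivRange f).toEquiv).symm
    rw [h1, ← Subgroup.index_eq_card]
    exact piResidual_index ↥H
  rcases h with ⟨-, hnorm⟩ | ⟨-, hn, hres⟩
  · have hn : (piResidualIn π H).Normal := normal_piResidualIn hnorm
    refine ⟨hn, ?_⟩
    letI := hn
    exact le_piCore (hnorm.map _ (QuotientGroup.mk'_surjective _)) (hcardim hn)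
  · refine ⟨hn, ?_⟩
    letI := hn
    exact lemW π (Nat.card (G ⧸ piResidualIn π H)) _ le_rfl _ (hcardim hn)
      (piResidual_quot_le_normalizer hn hres)

end PiAuxHelpers
end

section
/- Let π be a set of primes and H an N^π-Dnormal subgroup of a finite group G. Let C = Core_G(H) be the largest normal subgroup of G contained in H, and let ⟨H^G⟩ be the normal closure of H in G. Then ⟨H^G⟩/C is a π-group. -/
namespace DnormalAux

open Subgroup

variable {π : Set ℕ}

/-- `n` is a `π`-number. -/
def PiNat (π : Set ℕ) (n : ℕ) : Prop := ∀ p : ℕ, p.Prime → p ∣ n → p ∈ π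

theorem PiNat.of_dvd {n m : ℕ} (h : PiNat π n) (hd : m ∣ n) : PiNat π m :=
  fun p hp hpm => h p hp (hpm.trans hd)

theorem PiNat.mul {n m : ℕ} (h : PiNat π n) (h' : PiNat π m) : PiNat π (n * m) :=
  fun p hp hpm => ((Nat.Prime.dvd_mul hp).1 hpm).elim (h p hp) (h' p hp)

theorem piNat_one : PiNat π 1 := fun p hp hd => absurd (Nat.dvd_one.1 hd) hp.ne_one

variable {G : Type*} [Group G]

theorem orderOf_coe {H : Subgroup G} (y : H) : orderOf (y : G) = orderOf y :=
  orderOf_injective H.subtype (Subgroup.subtype_injective H) y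

theorem piResidual_normal : (piResidual π G).Normal := by
  constructor
  intro x hx g
  simp only [piResidual, Subgroup.mem_iInf] at hx ⊢
  intro N hN
  exact hN.1.conj_mem x (hx N hN) g

theorem piResidual_le {N : Subgroup G} (hN : N.Normal) (h : PiNat π N.index) :
    piResidual π G ≤ N :=
  iInf₂_le N ⟨hN, h⟩

theorem index_piResidual (π : Set ℕ) (G : Type*) [Group G] [Finite G] :
    PiNat π (piResidual π G).index := by
  classical
  set S : Set (Subgroup G) :=
    {N : Subgroup G | N.Normal ∧ ∀ p : ℕ, p.Prime → p ∣ N.index → p ∈ π} with hSdef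
  have hinf : InfClosed S := by
    rintro N ⟨hN, hNp⟩ M ⟨hM, hMp⟩
    constructor
    · exact ⟨fun x hx g => ⟨hN.conj_mem x hx.1 g, hM.conj_mem x hx.2 g⟩⟩
    · intro p hp hdvd
      have hker : N ⊓ M = ((QuotientGroup.mk' N).prod (QuotientGroup.mk' M)).ker := by
        rw [MonoidHom.ker_prod, QuotientGroup.ker_mk', QuotientGroup.ker_mk']
      rw [hker, Subgroup.index_ker] at hdvd
      have hcard : Nat.card (((QuotientGroup.mk' N).prod (QuotientGroup.mk' M)).range) ∣
          Nat.card ((G ⧸ N) × (G ⧸ M)) := Subgroup.card_subgroup_dvd_card _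
      have hfin := hdvd.trans hcard
      rw [Nat.card_prod, ← Subgroup.index_eq_card, ← Subgroup.index_eq_card] at hfin
      rcases hp.dvd_mul.1 hfin with h | h
      exacts [hNp p hp h, hMp p hp h]
  have hS : S.Finite := Set.toFinite S
  have hN0 : (⊤ : Subgroup G) ∈ S := by
    refine ⟨inferInstance, fun p hp hd => ?_⟩
    rw [Subgroup.index_top] at hd
    exact absurd (Nat.dvd_one.1 hd) hp.ne_one
  have htne : hS.toFinset.Nonempty := ⟨⊤, hS.mem_toFinset.2 hN0⟩
  have hmem : hS.toFinset.inf id ∈ S :=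
    hinf.finsetInf_mem htne (fun i hi => hS.mem_toFinset.1 hi)
  have heq : piResidual π G = hS.toFinset.inf id := by
    rw [Finset.inf_id_eq_sInf, hS.coe_toFinset, piResidual, ← hSdef, sInf_eq_iInf]
  rw [heq]
  exact hmem.2

theorem card_map_dvd {G' : Type*} [Group G'] (f : G →* G') (H : Subgroup G) :
    Nat.card (H.map f) ∣ Nat.card H := by
  have h : (f.comp H.subtype).range = H.map f := by
    rw [MonoidHom.range_comp, Subgroup.range_subtype]
  rw [← h]
  exact Subgroup.card_dvd_of_surjective (f.comp H.subtype).rangeRestrict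
    (f.comp H.subtype).rangeRestrict_surjective

theorem map_normalizer_le {G' : Type*} [Group G'] (f : G →* G') (H : Subgroup G) :
    (Subgroup.normalizer (H : Set _)).map f ≤ Subgroup.normalizer ((H.map f) : Set _) := by
  intro y hy
  rw [Subgroup.mem_map] at hy
  obtain ⟨x, hx, rfl⟩ := hy
  rw [Subgroup.mem_normalizer_iff] at hx ⊢
  intro y
  constructor
  · rintro ⟨h, hh, rfl⟩
    exact ⟨x * h * x⁻¹, (hx h).1 hh, by rw [map_mul, map_mul, map_inv]⟩
  · rintro ⟨k, hk, hky⟩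
    refine ⟨x⁻¹ * k * x, ?_, ?_⟩
    · have : x * (x⁻¹ * k * x) * x⁻¹ ∈ H := by
        convert hk using 1; group; exact Iff.rfl
      exact (hx _).2 this
    · rw [map_mul, map_mul, map_inv, hky]
      group

theorem piResidual_map_le {G' : Type*} [Group G'] [Finite G] (f : G →* G')
    (hf : Function.Surjective f) : piResidual π G' ≤ (piResidual π G).map f := by
  refine piResidual_le (piResidual_normal.map f hf) ?_
  refine (index_piResidual π G).of_dvd ?_
  rw [Subgroup.index_map, MonoidHom.range_eq_top.2 hf, Subgroup.index_top, mul_one]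
  exact Subgroup.index_dvd_of_le le_sup_left

theorem conj_map_eq {R : Subgroup G} (hR : R.Normal) (g : G) :
    R.map (MulAut.conj g).toMonoidHom = R := by
  ext x
  simp only [Subgroup.mem_map, MulEquiv.coe_toMonoidHom, MulAut.conj_apply]
  constructor
  · rintro ⟨r, hr, rfl⟩
    exact hR.conj_mem r hr g
  · intro hx
    exact ⟨g⁻¹ * x * g, by simpa using hR.conj_mem x hx g⁻¹, by group⟩

theorem mem_normalizer_iff_map {x : G} {K : Subgroup G} :
    x ∈ Subgroup.normalizer (K : Set _) ↔ K.map (MulAut.conj x).toMonoidHom = K := by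
  rw [Subgroup.mem_normalizer_iff]
  constructor
  · intro hx
    ext y
    simp only [Subgroup.mem_map, MulEquiv.coe_toMonoidHom, MulAut.conj_apply]
    constructor
    · rintro ⟨k, hk, rfl⟩
      exact (hx k).1 hk
    · intro hy
      refine ⟨x⁻¹ * y * x, (hx _).2 (by convert hy using 1; group), by group⟩
  · intro hmap h
    constructor
    · intro hh
      rw [← hmap]
      exact ⟨h, hh, by simp [MulAut.conj_apply]⟩
    · intro hconj
      rw [← hmap] at hconj
      obtain ⟨k, hk, hke⟩ := hconj
      simp only [MulEquiv.coe_toMonoidHom, MulAut.conj_apply] at hke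
      have : k = h := mul_left_cancel (mul_right_cancel hke)
      rwa [← this]

theorem le_normalizer_sup {A B C : Subgroup G} (hA : C ≤ Subgroup.normalizer (A : Set _))
    (hB : C ≤ Subgroup.normalizer (B : Set _)) : C ≤ Subgroup.normalizer ((A ⊔ B : Subgroup G) : Set G) := by
  intro x hx
  rw [mem_normalizer_iff_map, Subgroup.map_sup,
    mem_normalizer_iff_map.1 (hA hx), mem_normalizer_iff_map.1 (hB hx)]

theorem le_normalizer_inf {A B C : Subgroup G} (hA : C ≤ Subgroup.normalizer (A : Set _))
    (hB : C ≤ Subgroup.normalizer (B : Set _)) : C ≤ Subgroup.normalizer ((A ⊓ B : Subgroup G) : Set G) := by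
  intro x hx
  rw [mem_normalizer_iff_map,
    Subgroup.map_inf A B _ (MulAut.conj x).injective,
    mem_normalizer_iff_map.1 (hA hx), mem_normalizer_iff_map.1 (hB hx)]

theorem card_sup_dvd [Finite G] {A B : Subgroup G} (hAB : A ≤ Subgroup.normalizer (B : Set _)) :
    Nat.card ↥(A ⊔ B) ∣ Nat.card A * Nat.card B := by
  have hBY : B ≤ Subgroup.normalizer (B : Set _) := Subgroup.le_normalizer
  set Y := Subgroup.normalizer (B : Set G) with hY
  set A' := A.subgroupOf Y with hA'
  set B' := B.subgroupOf Y with hB'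
  haveI hBn : B'.Normal := Subgroup.normal_in_normalizer
  have hmap : (A' ⊔ B').map Y.subtype = A ⊔ B := by
    rw [Subgroup.map_sup, hA', hB', subgroupOf_map_subtype, subgroupOf_map_subtype,
      inf_eq_left.2 hAB, inf_eq_left.2 hBY]
  have hcardsup : Nat.card ↥(A' ⊔ B') = Nat.card ↥(A ⊔ B) := by
    rw [← hmap]
    exact Nat.card_congr ((A' ⊔ B').equivMapOfInjective Y.subtype Y.subtype_injective).toEquiv
  have hcA : Nat.card A' = Nat.card A :=
    Nat.card_congr (Subgroup.subgroupOfEquivOfLe hAB).toEquiv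
  have hcB : Nat.card B' = Nat.card B :=
    Nat.card_congr (Subgroup.subgroupOfEquivOfLe hBY).toEquiv
  have h1 : Nat.card ↥(B'.subgroupOf (A' ⊔ B')) * (B'.subgroupOf (A' ⊔ B')).index
      = Nat.card ↥(A' ⊔ B') := Subgroup.card_mul_index _
  have h2 : Nat.card ↥(B'.subgroupOf (A' ⊔ B')) = Nat.card B' :=
    Nat.card_congr (Subgroup.subgroupOfEquivOfLe le_sup_right).toEquiv
  have h4 : B'.relIndex (A' ⊔ B') = B'.relIndex A' := Subgroup.relIndex_sup_right A' B'
  have h5 : B'.relIndex A' ∣ Nat.card A' := Subgroup.index_dvd_card _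
  have key : Nat.card ↥(A' ⊔ B') ∣ Nat.card A' * Nat.card B' := by
    rw [← h1, h2]
    have h3 : (B'.subgroupOf (A' ⊔ B')).index = B'.relIndex A' := h4
    rw [h3, mul_comm (Nat.card ↥A') (Nat.card ↥B')]
    exact Nat.mul_dvd_mul_left _ h5
  rw [← hcardsup, ← hcA, ← hcB]
  exact key

theorem le_normalizer_finset_sup {C : Subgroup G} (F : Finset (Subgroup G))
    (h : ∀ B ∈ F, C ≤ Subgroup.normalizer (B : Set _)) : C ≤ Subgroup.normalizer ((F.sup id : Subgroup G) : Set G) := by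
  classical
  induction F using Finset.induction_on with
  | empty =>
    intro x _
    rw [Finset.sup_empty, mem_normalizer_iff_map]
    ext y; simp
  | @insert a s hni ih =>
    rw [Finset.sup_insert]
    exact le_normalizer_sup (h a (Finset.mem_insert_self a s))
      (ih fun B hB => h B (Finset.mem_insert_of_mem hB))

theorem piNat_card_finset_sup [Finite G] (F : Finset (Subgroup G))
    (hpi : ∀ A ∈ F, PiNat π (Nat.card A))
    (hmut : ∀ A ∈ F, ∀ B ∈ F, A ≤ Subgroup.normalizer (B : Set _)) :
    PiNat π (Nat.card ↥(F.sup id)) := by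
  classical
  induction F using Finset.induction_on with
  | empty =>
    rw [Finset.sup_empty]
    intro p hp hd
    rw [Subgroup.card_bot] at hd
    exact absurd (Nat.dvd_one.1 hd) hp.ne_one
  | @insert a s hni ih =>
    rw [Finset.sup_insert]
    have ha : a ≤ Subgroup.normalizer ((s.sup id : Subgroup G) : Set G) :=
      le_normalizer_finset_sup s fun B hB =>
        hmut a (Finset.mem_insert_self a s) B (Finset.mem_insert_of_mem hB)
    have hdvd : Nat.card ↥(a ⊔ s.sup id) ∣ Nat.card a * Nat.card ↥(s.sup id) :=
      card_sup_dvd ha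
    have hsub : PiNat π (Nat.card ↥(s.sup id)) :=
      ih (fun A hA => hpi A (Finset.mem_insert_of_mem hA))
        (fun A hA B hB => hmut A (Finset.mem_insert_of_mem hA) B (Finset.mem_insert_of_mem hB))
    exact ((hpi a (Finset.mem_insert_self a s)).mul hsub).of_dvd hdvd

universe u

theorem lemB (π : Set ℕ) : ∀ (n : ℕ) (X : Type u) [Group X] [Finite X] (H : Subgroup X),
    Nat.card X + Nat.card H ≤ n → PiNat π (Nat.card H) →
    piResidual π X ≤ Subgroup.normalizer (H : Set _) →
    PiNat π (Nat.card ↥(Subgroup.normalClosure (H : Set X))) := by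
  intro n
  induction n using Nat.strong_induction_on with
  | _ n IH =>
  intro X _ _ H hn hpi hR
  classical
  haveI hRn : (piResidual π X).Normal := piResidual_normal
  haveI hLn : (Subgroup.normalClosure (H : Set X)).Normal := Subgroup.normalClosure_normal
  have conj_comp : ∀ g x : X, (MulAut.conj g).toMonoidHom.comp (MulAut.conj x).toMonoidHom
      = (MulAut.conj (g * x)).toMonoidHom := by
    intro g x; ext h; simp [MulAut.conj_apply, mul_assoc]
  have hHgR : ∀ g : X, piResidual π X ≤ Subgroup.normalizer ((H.map (MulAut.conj g).toMonoidHom) : Set _) := by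
    intro g
    calc piResidual π X = (piResidual π X).map (MulAut.conj g).toMonoidHom :=
          (conj_map_eq hRn g).symm
    _ ≤ (Subgroup.normalizer (H : Set _)).map (MulAut.conj g).toMonoidHom := Subgroup.map_mono hR
    _ ≤ Subgroup.normalizer ((H.map (MulAut.conj g).toMonoidHom) : Set _) := map_normalizer_le _ H
  have hHgcard : ∀ g : X, Nat.card (H.map (MulAut.conj g).toMonoidHom) = Nat.card H := by
    intro g
    exact (Nat.card_congr (H.equivMapOfInjective _ (MulAut.conj g).injective).toEquiv).symm
  by_cases hHR : H ≤ piResidual π X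
  · -- H is contained in the residual; its conjugates are normal in the residual
    set T : Set (Subgroup X) :=
      Set.range (fun g : X => H.map (MulAut.conj g).toMonoidHom) with hTdef
    have hT : T.Finite := Set.toFinite T
    have hmapT : ∀ g : X, (sSup T).map (MulAut.conj g).toMonoidHom = sSup T := by
      intro g
      rw [(Subgroup.gc_map_comap _).l_sSup]
      apply le_antisymm
      · refine iSup₂_le fun A hA => ?_
        obtain ⟨x, rfl⟩ := hA
        refine le_sSup ⟨g * x, ?_⟩
        rw [Subgroup.map_map, conj_comp]
      · refine sSup_le fun A hA => ?_
        obtain ⟨x, rfl⟩ := hA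
        have hEq : (H.map (MulAut.conj (g⁻¹ * x)).toMonoidHom).map (MulAut.conj g).toMonoidHom
            = H.map (MulAut.conj x).toMonoidHom := by
          rw [Subgroup.map_map, conj_comp, mul_inv_cancel_left]
        refine le_trans (le_of_eq hEq.symm) ?_
        exact le_iSup₂_of_le (H.map (MulAut.conj (g⁻¹ * x)).toMonoidHom) ⟨g⁻¹ * x, rfl⟩ le_rfl
    haveI hTn : (sSup T).Normal := by
      constructor
      intro m hm g
      rw [← hmapT g]
      exact ⟨m, hm, by simp [MulAut.conj_apply]⟩
    have hHT : H ≤ sSup T := by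
      refine le_sSup ⟨1, ?_⟩
      ext y; simp [MulAut.conj_apply]
    have hle1 : Subgroup.normalClosure (H : Set X) ≤ sSup T :=
      Subgroup.normalClosure_le_normal hHT
    have hle2 : sSup T ≤ Subgroup.normalClosure (H : Set X) := by
      refine sSup_le ?_
      rintro A ⟨x, rfl⟩
      calc H.map (MulAut.conj x).toMonoidHom
          ≤ (Subgroup.normalClosure (H : Set X)).map (MulAut.conj x).toMonoidHom :=
            Subgroup.map_mono Subgroup.le_normalClosure
      _ = Subgroup.normalClosure (H : Set X) := conj_map_eq hLn x
    have hLT : Subgroup.normalClosure (H : Set X) = sSup T := le_antisymm hle1 hle2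
    have hfin : sSup T = hT.toFinset.sup id := by
      rw [Finset.sup_id_eq_sSup, hT.coe_toFinset]
    rw [hLT, hfin]
    apply piNat_card_finset_sup
    · intro A hA
      rw [hT.mem_toFinset] at hA
      obtain ⟨x, rfl⟩ := hA
      rw [hHgcard x]
      exact hpi
    · intro A hA B hB
      rw [hT.mem_toFinset] at hA hB
      obtain ⟨x, rfl⟩ := hA
      obtain ⟨y, rfl⟩ := hB
      calc H.map (MulAut.conj x).toMonoidHom
          ≤ (piResidual π X).map (MulAut.conj x).toMonoidHom := Subgroup.map_mono hHR
      _ = piResidual π X := conj_map_eq hRn x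
      _ ≤ Subgroup.normalizer ((H.map (MulAut.conj y).toMonoidHom) : Set _) := hHgR y
  by_cases hW : ∃ W : Subgroup X, W.Normal ∧ PiNat π (Nat.card W) ∧ W ≠ ⊥
  · -- quotient by a nontrivial normal π-subgroup
    obtain ⟨W, hWn, hWpi, hWbot⟩ := hW
    haveI := hWn
    set f := QuotientGroup.mk' W with hf
    have hfs : Function.Surjective f := QuotientGroup.mk'_surjective W
    have hcm : Nat.card ↥W * W.index = Nat.card X := Subgroup.card_mul_index W
    have h2 : 1 < Nat.card ↥W := (Subgroup.one_lt_card_iff_ne_bot (H := W)).2 hWbot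
    have h3 : 0 < W.index := Nat.pos_of_ne_zero Subgroup.index_ne_zero_of_finite
    have hq : Nat.card (X ⧸ W) < Nat.card X := by
      rw [← Subgroup.index_eq_card]
      calc W.index = 1 * W.index := (one_mul _).symm
      _ < Nat.card ↥W * W.index := by exact Nat.mul_lt_mul_of_lt_of_le h2 le_rfl h3
      _ = Nat.card X := hcm
    have hhd : Nat.card (H.map f) ≤ Nat.card H :=
      Nat.le_of_dvd Nat.card_pos (card_map_dvd f H)
    have hQ : PiNat π (Nat.card ↥(Subgroup.normalClosure ((H.map f : Subgroup (X ⧸ W)) :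
        Set (X ⧸ W)))) := by
      refine IH (Nat.card (X ⧸ W) + Nat.card (H.map f)) (by omega) (X ⧸ W) (H.map f) le_rfl
        (hpi.of_dvd (card_map_dvd f H)) ?_
      exact (piResidual_map_le f hfs).trans
        ((Subgroup.map_mono hR).trans (map_normalizer_le f H))
    have hmapL : (Subgroup.normalClosure (H : Set X)).map f
        = Subgroup.normalClosure ((H.map f : Subgroup (X ⧸ W)) : Set (X ⧸ W)) := by
      rw [Subgroup.map_normalClosure _ _ hfs, Subgroup.coe_map]
    set g := f.comp (Subgroup.normalClosure (H : Set X)).subtype with hg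
    have hker : g.ker = W.subgroupOf (Subgroup.normalClosure (H : Set X)) := by
      rw [hg, ← MonoidHom.comap_ker, hf, QuotientGroup.ker_mk', Subgroup.comap_subtype]
    have hrange : g.range = (Subgroup.normalClosure (H : Set X)).map f := by
      rw [hg, MonoidHom.range_comp, Subgroup.range_subtype]
    have hcardL : Nat.card g.ker * g.ker.index
        = Nat.card ↥(Subgroup.normalClosure (H : Set X)) := Subgroup.card_mul_index _
    have hkerdvd : Nat.card g.ker ∣ Nat.card ↥W := by
      rw [hker]
      have hmapker : ((W.subgroupOf (Subgroup.normalClosure (H : Set X))).map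
          (Subgroup.normalClosure (H : Set X)).subtype)
          = W ⊓ Subgroup.normalClosure (H : Set X) := Subgroup.subgroupOf_map_subtype _ _
      have hdl := Subgroup.card_dvd_of_le
        (inf_le_left : W ⊓ Subgroup.normalClosure (H : Set X) ≤ W)
      rw [← hmapker] at hdl
      rwa [Nat.card_congr ((W.subgroupOf (Subgroup.normalClosure (H : Set X))).equivMapOfInjective
        _ (Subgroup.subtype_injective _)).toEquiv]
    have hindex : g.ker.index = Nat.card ↥((Subgroup.normalClosure (H : Set X)).map f) := by
      rw [Subgroup.index_ker, hrange]
    intro p hp hd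
    rw [← hcardL] at hd
    rcases hp.dvd_mul.1 hd with h | h
    · exact hWpi p hp (h.trans hkerdvd)
    · rw [hindex, hmapL] at h
      exact hQ p hp h
  · -- no nontrivial normal π-subgroup
    push_neg at hW
    have hW' : ∀ W : Subgroup X, W.Normal → PiNat π (Nat.card W) → W = ⊥ := hW
    -- the intersection H ⊓ R is strictly smaller than H
    have hDne : H ⊓ piResidual π X ≠ H := by
      intro he
      exact hHR (inf_eq_left.1 he)
    have hcardD : Nat.card ↥(H ⊓ piResidual π X) < Nat.card ↥H := by
      have hle := Subgroup.card_le_of_le (inf_le_left : H ⊓ piResidual π X ≤ H)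
      rcases lt_or_eq_of_le hle with h | h
      · exact h
      · exact absurd (Subgroup.eq_of_le_of_card_ge inf_le_left (le_of_eq h.symm)) hDne
    have hP := IH (Nat.card X + Nat.card ↥(H ⊓ piResidual π X)) (by omega) X
      (H ⊓ piResidual π X) le_rfl
      (hpi.of_dvd (Subgroup.card_dvd_of_le inf_le_left))
      (le_normalizer_inf hR Subgroup.le_normalizer)
    have hPbot : Subgroup.normalClosure ((H ⊓ piResidual π X : Subgroup X) : Set X) = ⊥ :=
      hW' _ Subgroup.normalClosure_normal hP
    have hDbot : H ⊓ piResidual π X = ⊥ :=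
      le_bot_iff.1 (le_trans Subgroup.le_normalClosure (le_of_eq hPbot))
    have hHgbot : ∀ g : X, H.map (MulAut.conj g).toMonoidHom ⊓ piResidual π X = ⊥ := by
      intro g
      rw [← conj_map_eq hRn g, ← Subgroup.map_inf _ _ _ (MulAut.conj g).injective, hDbot,
        Subgroup.map_bot]
    have hcomm : ∀ r ∈ piResidual π X, ∀ c ∈ Group.conjugatesOfSet (H : Set X),
        r * c = c * r := by
      intro r hr c hc
      rw [Group.mem_conjugatesOfSet_iff] at hc
      obtain ⟨a, ha, hconj⟩ := hc
      obtain ⟨u, rfl⟩ := isConj_iff.1 hconj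
      have hcmem : u * a * u⁻¹ ∈ H.map (MulAut.conj u).toMonoidHom :=
        ⟨a, ha, by simp [MulAut.conj_apply]⟩
      have hrn : r ∈ Subgroup.normalizer ((H.map (MulAut.conj u).toMonoidHom) : Set _) := hHgR u hr
      have h1 : r * (u * a * u⁻¹) * r⁻¹ ∈ H.map (MulAut.conj u).toMonoidHom := by
        have := (Subgroup.mem_normalizer_iff.1 hrn (u * a * u⁻¹)).1 hcmem
        convert this using 2
      have h2 : r * (u * a * u⁻¹) * r⁻¹ * (u * a * u⁻¹)⁻¹ ∈ H.map (MulAut.conj u).toMonoidHom :=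
        mul_mem h1 (inv_mem hcmem)
      have h3 : r * (u * a * u⁻¹) * r⁻¹ * (u * a * u⁻¹)⁻¹ ∈ piResidual π X := by
        have hmem := hRn.conj_mem r⁻¹ (inv_mem hr) (u * a * u⁻¹)
        have hmem2 := mul_mem hr hmem
        convert hmem2 using 1
        group
      have h4 : r * (u * a * u⁻¹) * r⁻¹ * (u * a * u⁻¹)⁻¹ = 1 := by
        have hb : r * (u * a * u⁻¹) * r⁻¹ * (u * a * u⁻¹)⁻¹ ∈
            H.map (MulAut.conj u).toMonoidHom ⊓ piResidual π X := ⟨h2, h3⟩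
        rw [hHgbot u] at hb
        exact Subgroup.mem_bot.1 hb
      have h5 : r * (u * a * u⁻¹) * r⁻¹ = u * a * u⁻¹ := mul_inv_eq_one.1 h4
      calc r * (u * a * u⁻¹) = r * (u * a * u⁻¹) * r⁻¹ * r := by group
      _ = (u * a * u⁻¹) * r := by rw [h5]
    have hcent : ∀ z ∈ piResidual π X, ∀ x ∈ Subgroup.normalClosure (H : Set X),
        x * z = z * x := by
      intro z hz x hx
      have h2 : Subgroup.normalClosure (H : Set X)
          = Subgroup.closure (Group.conjugatesOfSet (H : Set X)) := rfl
      have h1 : Subgroup.normalClosure (H : Set X) ≤ Subgroup.centralizer {z} := by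
        rw [h2, Subgroup.closure_le]
        intro c hc
        rw [SetLike.mem_coe, Subgroup.mem_centralizer_singleton_iff]
        exact (hcomm z hz c hc).symm
      exact Subgroup.mem_centralizer_singleton_iff.1 (h1 hx)
    have hZn : (Subgroup.normalClosure (H : Set X) ⊓ piResidual π X).Normal :=
      ⟨fun x hx g => ⟨hLn.conj_mem x hx.1 g, hRn.conj_mem x hx.2 g⟩⟩
    have hZcomm : ∀ z ∈ Subgroup.normalClosure (H : Set X) ⊓ piResidual π X,
        ∀ x ∈ Subgroup.normalClosure (H : Set X), x * z = z * x := by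
      intro z hz x hx
      exact hcent z (Subgroup.mem_inf.1 hz).2 x hx
    -- the subgroup of π-elements of Z
    set Z := Subgroup.normalClosure (H : Set X) ⊓ piResidual π X with hZdef
    let Zpi : Subgroup X :=
      { carrier := {x | x ∈ Z ∧ PiNat π (orderOf x)}
        one_mem' := ⟨Z.one_mem, by rw [orderOf_one]; exact piNat_one⟩
        mul_mem' := by
          rintro a b ⟨haZ, hapi⟩ ⟨hbZ, hbpi⟩
          refine ⟨Z.mul_mem haZ hbZ, ?_⟩
          have hab : Commute a b := hZcomm b hbZ a (Subgroup.mem_inf.1 haZ).1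
          exact ((hapi.mul hbpi).of_dvd (Nat.lcm_dvd_mul _ _)).of_dvd hab.orderOf_mul_dvd_lcm
        inv_mem' := by
          rintro a ⟨haZ, hapi⟩
          exact ⟨Z.inv_mem haZ, by rwa [orderOf_inv]⟩ }
    have hmemZpi : ∀ w : X, w ∈ Zpi ↔ w ∈ Z ∧ PiNat π (orderOf w) := fun _ => Iff.rfl
    have hZpiN : Zpi.Normal := by
      constructor
      intro x hx g
      obtain ⟨hxZ, hxpi⟩ := (hmemZpi x).1 hx
      refine (hmemZpi _).2 ⟨hZn.conj_mem x hxZ g, ?_⟩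
      have hcg : g * x * g⁻¹ = (MulAut.conj g).toMonoidHom x := by simp [MulAut.conj_apply]
      rw [hcg, orderOf_injective _ (MulAut.conj g).injective]
      exact hxpi
    have hZpipi : PiNat π (Nat.card Zpi) := by
      intro p hp hd
      haveI := Fact.mk hp
      obtain ⟨x, hx⟩ := exists_prime_orderOf_dvd_card' p hd
      have hxo : orderOf (x : X) = p := by
        rw [orderOf_coe]
        exact hx
      obtain ⟨-, hxpi⟩ := (hmemZpi (x : X)).1 x.2
      exact hxpi p hp (hxo ▸ dvd_refl p)
    have hZpibot : Zpi = ⊥ := hW' Zpi hZpiN hZpipi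
    have hnoπ : ∀ z ∈ Z, ∀ p : ℕ, p.Prime → p ∈ π → ¬ p ∣ orderOf z := by
      intro z hz p hp hpπ hdvd
      haveI := Fact.mk hp
      have hdd : p ∣ Nat.card (Subgroup.zpowers z) := by rwa [Nat.card_zpowers]
      obtain ⟨y, hy⟩ := exists_prime_orderOf_dvd_card' p hdd
      have hyo : orderOf (y : X) = p := by
        rw [orderOf_coe]
        exact hy
      have hymem : (y : X) ∈ Zpi := (hmemZpi _).2 ⟨Subgroup.zpowers_le.2 hz y.2, by
        rw [hyo]
        intro q hq hqp
        rwa [(Nat.prime_dvd_prime_iff_eq hq hp).1 hqp]⟩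
      rw [hZpibot] at hymem
      have hy1 : (y : X) = 1 := Subgroup.mem_bot.1 hymem
      rw [hy1, orderOf_one] at hyo
      exact hp.ne_one hyo.symm
    -- Z is central in L
    have hZcenter : Z.subgroupOf (Subgroup.normalClosure (H : Set X))
        ≤ Subgroup.center ↥(Subgroup.normalClosure (H : Set X)) := by
      intro x hx
      rw [Subgroup.mem_center_iff]
      intro g
      exact Subtype.ext (hZcomm (↑x) (Subgroup.mem_subgroupOf.1 hx) (↑g) g.2)
    have hsub_eq : Z.subgroupOf (Subgroup.normalClosure (H : Set X))
        = (piResidual π X).subgroupOf (Subgroup.normalClosure (H : Set X)) := by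
      ext x
      simp only [hZdef, Subgroup.mem_subgroupOf, Subgroup.mem_inf]
      exact ⟨fun h => h.2, fun h => ⟨x.2, h⟩⟩
    have hn0 : PiNat π (Subgroup.center ↥(Subgroup.normalClosure (H : Set X))).index := by
      refine (index_piResidual π X).of_dvd ?_
      have h1 := Subgroup.index_dvd_of_le hZcenter
      rw [hsub_eq] at h1
      exact h1.trans (Subgroup.relIndex_dvd_index_of_normal (piResidual π X) _)
    set φ := MonoidHom.transferCenterPow ↥(Subgroup.normalClosure (H : Set X)) with hφ
    let U : Subgroup ↥(Subgroup.normalClosure (H : Set X)) :=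
      { carrier := {x | PiNat π (orderOf ((φ x : _) : ↥(Subgroup.normalClosure (H : Set X))))}
        one_mem' := by
          rw [Set.mem_setOf_eq, map_one, OneMemClass.coe_one, orderOf_one]
          exact piNat_one
        mul_mem' := by
          rintro a b ha hb
          rw [Set.mem_setOf_eq] at ha hb ⊢
          have hmul : ((φ (a * b) : _) : ↥(Subgroup.normalClosure (H : Set X)))
              = ((φ a : _) : _) * ((φ b : _) : _) := by rw [map_mul]; rfl
          have hcomm' : Commute ((φ a : _) : ↥(Subgroup.normalClosure (H : Set X)))
              ((φ b : _) : _) :=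
            Subgroup.mem_center_iff.1 (φ b).2 _
          rw [hmul]
          exact ((ha.mul hb).of_dvd (Nat.lcm_dvd_mul _ _)).of_dvd hcomm'.orderOf_mul_dvd_lcm
        inv_mem' := by
          rintro a ha
          rw [Set.mem_setOf_eq] at ha ⊢
          have hinv : ((φ a⁻¹ : _) : ↥(Subgroup.normalClosure (H : Set X)))
              = (((φ a : _) : ↥(Subgroup.normalClosure (H : Set X))))⁻¹ := by
            rw [map_inv]; rfl
          rwa [hinv, orderOf_inv] }
    have hUmem : ∀ w : ↥(Subgroup.normalClosure (H : Set X)), w ∈ U ↔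
        PiNat π (orderOf ((φ w : _) : ↥(Subgroup.normalClosure (H : Set X)))) :=
      fun _ => Iff.rfl
    have hUtop : ∀ x : ↥(Subgroup.normalClosure (H : Set X)),
        PiNat π (orderOf ((φ x : _) : ↥(Subgroup.normalClosure (H : Set X)))) := by
      have hmapU : Subgroup.normalClosure (H : Set X)
          ≤ U.map (Subgroup.normalClosure (H : Set X)).subtype := by
        have h2 : Subgroup.normalClosure (H : Set X)
            = Subgroup.closure (Group.conjugatesOfSet (H : Set X)) := rfl
        nth_rewrite 1 [h2]
        rw [Subgroup.closure_le]
        intro c hc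
        have hcL : c ∈ Subgroup.normalClosure (H : Set X) :=
          Subgroup.conjugatesOfSet_subset_normalClosure hc
        rw [Group.mem_conjugatesOfSet_iff] at hc
        obtain ⟨a, ha, hconj⟩ := hc
        have hoc : orderOf c = orderOf a := by
          obtain ⟨u, hu⟩ := isConj_iff.1 hconj
          have hca : c = (MulAut.conj u).toMonoidHom a := by
            rw [← hu]; simp [MulAut.conj_apply]
          rw [hca, orderOf_injective _ (MulAut.conj u).injective]
        have hoa : PiNat π (orderOf a) := by
          refine hpi.of_dvd ?_
          have hsub' : orderOf a = orderOf (⟨a, ha⟩ : ↥H) := orderOf_coe ⟨a, ha⟩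
          rw [hsub']
          exact orderOf_dvd_natCard _
        refine ⟨⟨c, hcL⟩, (hUmem _).2 ?_, rfl⟩
        have hdvd1 : orderOf ((φ ⟨c, hcL⟩ : _) : ↥(Subgroup.normalClosure (H : Set X)))
            ∣ orderOf (⟨c, hcL⟩ : ↥(Subgroup.normalClosure (H : Set X))) := by
          have h3 : orderOf ((φ ⟨c, hcL⟩ : _) : ↥(Subgroup.normalClosure (H : Set X)))
              = orderOf (φ ⟨c, hcL⟩) := orderOf_coe _
          rw [h3]
          exact orderOf_map_dvd φ _
        have hdvd2 : orderOf (⟨c, hcL⟩ : ↥(Subgroup.normalClosure (H : Set X))) = orderOf c :=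
          (orderOf_coe ⟨c, hcL⟩).symm
        rw [hdvd2, hoc] at hdvd1
        exact hoa.of_dvd hdvd1
      intro x
      have hx : (x : X) ∈ U.map (Subgroup.normalClosure (H : Set X)).subtype := hmapU x.2
      obtain ⟨u', hu', heq⟩ := hx
      have hux : u' = x := Subtype.ext heq
      rw [← hux]
      exact (hUmem u').1 hu'
    have hZbot : Z = ⊥ := by
      rw [eq_bot_iff]
      intro z hz
      have hzL : z ∈ Subgroup.normalClosure (H : Set X) := (Subgroup.mem_inf.1 hz).1
      have hφz : ((φ (⟨z, hzL⟩ : ↥(Subgroup.normalClosure (H : Set X))) : _)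
          : ↥(Subgroup.normalClosure (H : Set X)))
          = (⟨z, hzL⟩ : ↥(Subgroup.normalClosure (H : Set X)))
            ^ (Subgroup.center ↥(Subgroup.normalClosure (H : Set X))).index :=
        MonoidHom.transferCenterPow_apply _
      have hord1 : PiNat π (orderOf ((⟨z, hzL⟩ : ↥(Subgroup.normalClosure (H : Set X)))
          ^ (Subgroup.center ↥(Subgroup.normalClosure (H : Set X))).index)) := by
        rw [← hφz]
        exact hUtop _
      have hordz : orderOf (⟨z, hzL⟩ : ↥(Subgroup.normalClosure (H : Set X))) = orderOf z :=
        (orderOf_coe ⟨z, hzL⟩).symm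
      have hdvd : orderOf ((⟨z, hzL⟩ : ↥(Subgroup.normalClosure (H : Set X)))
          ^ (Subgroup.center ↥(Subgroup.normalClosure (H : Set X))).index)
          ∣ orderOf (⟨z, hzL⟩ : ↥(Subgroup.normalClosure (H : Set X))) := orderOf_pow_dvd _
      have hone : orderOf ((⟨z, hzL⟩ : ↥(Subgroup.normalClosure (H : Set X)))
          ^ (Subgroup.center ↥(Subgroup.normalClosure (H : Set X))).index) = 1 := by
        rw [Nat.eq_one_iff_not_exists_prime_dvd]
        intro p hp hpd
        refine hnoπ z hz p hp (hord1 p hp hpd) ?_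
        rw [← hordz]
        exact hpd.trans hdvd
      have hpow1 : (⟨z, hzL⟩ : ↥(Subgroup.normalClosure (H : Set X)))
          ^ (Subgroup.center ↥(Subgroup.normalClosure (H : Set X))).index = 1 :=
        orderOf_eq_one_iff.1 hone
      have hdvd2 : orderOf (⟨z, hzL⟩ : ↥(Subgroup.normalClosure (H : Set X)))
          ∣ (Subgroup.center ↥(Subgroup.normalClosure (H : Set X))).index :=
        orderOf_dvd_of_pow_eq_one hpow1
      have hz1 : orderOf z = 1 := by
        rw [Nat.eq_one_iff_not_exists_prime_dvd]
        intro p hp hpd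
        have hpd' : p ∣ orderOf (⟨z, hzL⟩ : ↥(Subgroup.normalClosure (H : Set X))) := by
          rw [hordz]; exact hpd
        exact hnoπ z hz p hp (hn0 p hp (hpd'.trans hdvd2)) hpd
      have : z = 1 := orderOf_eq_one_iff.1 hz1
      rw [this]
      exact Subgroup.mem_bot.2 rfl
    have hinj : Function.Injective
        ((QuotientGroup.mk' (piResidual π X)).comp
          (Subgroup.normalClosure (H : Set X)).subtype) := by
      rw [← MonoidHom.ker_eq_bot_iff, ← MonoidHom.comap_ker, QuotientGroup.ker_mk',
        Subgroup.comap_subtype, eq_bot_iff]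
      intro x hx
      have hxZ : (x : X) ∈ Z := Subgroup.mem_inf.2 ⟨x.2, Subgroup.mem_subgroupOf.1 hx⟩
      rw [hZbot] at hxZ
      exact Subgroup.mem_bot.2 (Subtype.ext (Subgroup.mem_bot.1 hxZ))
    have hcard : Nat.card ↥(Subgroup.normalClosure (H : Set X))
        ∣ Nat.card (X ⧸ piResidual π X) := Subgroup.card_dvd_of_injective _ hinj
    refine (index_piResidual π X).of_dvd ?_
    rw [Subgroup.index_eq_card]
    exact hcard

end DnormalAux

/-- Lemma 1.5(2): if `H` is `N^π`-Dnormal in `G`, `C = Core_G(H)` and `⟨H^G⟩` is the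
normal closure of `H` in `G`, then `⟨H^G⟩/C` is a `π`-group (every prime dividing
the index of `C` in `⟨H^G⟩` lies in `π`). -/
theorem normalClosure_over_core_pi (π : Set ℕ) (hπ : ∀ p ∈ π, p.Prime)
    (G : Type*) [Group G] [Finite G] (H : Subgroup G)
    (h : IsDnormal π H) :
    ∀ p : ℕ, p.Prime →
      p ∣ (H.normalCore.subgroupOf (Subgroup.normalClosure (H : Set G))).index → p ∈ π := by
  classical
  open DnormalAux in
  rcases h with ⟨hsub, hN⟩ | ⟨hns, hKn, hR⟩
  · haveI := hN
    intro p hp hd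
    rw [Subgroup.normalClosure_eq_self, Subgroup.normalCore_eq_self, Subgroup.subgroupOf_self,
      Subgroup.index_top] at hd
    exact absurd (Nat.dvd_one.1 hd) hp.ne_one
  · haveI := hKn
    set K := piResidualIn π H with hKdef
    have hKH : K ≤ H := Subgroup.map_subtype_le _
    have hKC : K ≤ H.normalCore := Subgroup.normal_le_normalCore.2 hKH
    set f := QuotientGroup.mk' K with hf
    have hfs : Function.Surjective f := QuotientGroup.mk'_surjective K
    have hHker : (f.comp H.subtype).ker = piResidual π ↥H := by
      rw [← MonoidHom.comap_ker, hf, QuotientGroup.ker_mk']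
      exact Subgroup.comap_map_eq_self_of_injective (Subgroup.subtype_injective H) _
    have hcardH' : Nat.card ↥(H.map f) = (piResidual π ↥H).index := by
      have h1 : (f.comp H.subtype).range = H.map f := by
        rw [MonoidHom.range_comp, Subgroup.range_subtype]
      rw [← h1, ← Subgroup.index_ker, hHker]
    have hpiH' : PiNat π (Nat.card ↥(H.map f)) := by
      rw [hcardH']
      exact index_piResidual π ↥H
    have hR' : piResidual π (G ⧸ K) ≤ Subgroup.normalizer ((H.map f) : Set _) :=
      (piResidual_map_le f hfs).trans ((Subgroup.map_mono hR).trans (map_normalizer_le f H))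
    have hQ : PiNat π (Nat.card
        ↥(Subgroup.normalClosure ((H.map f : Subgroup (G ⧸ K)) : Set (G ⧸ K)))) :=
      lemB π (Nat.card (G ⧸ K) + Nat.card ↥(H.map f)) (G ⧸ K) (H.map f) le_rfl hpiH' hR'
    set L := Subgroup.normalClosure (H : Set G) with hL
    have hmapL : L.map f = Subgroup.normalClosure
        ((H.map f : Subgroup (G ⧸ K)) : Set (G ⧸ K)) := by
      rw [hL, Subgroup.map_normalClosure _ _ hfs, Subgroup.coe_map]
    have hkerL : (f.comp L.subtype).ker = K.subgroupOf L := by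
      rw [← MonoidHom.comap_ker, hf, QuotientGroup.ker_mk', Subgroup.comap_subtype]
    have hindexK : (K.subgroupOf L).index = Nat.card ↥(L.map f) := by
      rw [← hkerL, Subgroup.index_ker, MonoidHom.range_comp, Subgroup.range_subtype]
    intro p hp hd
    have hle : K.subgroupOf L ≤ H.normalCore.subgroupOf L := by
      exact Subgroup.comap_mono hKC
    have hdvd : (H.normalCore.subgroupOf L).index ∣ (K.subgroupOf L).index :=
      Subgroup.index_dvd_of_le hle
    rw [hindexK, hmapL] at hdvd
    exact hQ p hp (hd.trans hdvd)
end

section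
/- Let π be a set of primes, H an N^π-Dnormal subgroup of a finite group G, and V any subgroup of G. Then H ∩ V is N^π-Dnormal in V. -/
/-- closure of a conjugation-invariant set is normal -/
lemma closure_normal_of_conj_mem {G : Type*} [Group G] {s : Set G}
    (h : ∀ (g : G), ∀ x ∈ s, g * x * g⁻¹ ∈ s) : (Subgroup.closure s).Normal := by
  have hs : Subgroup.closure s = Subgroup.normalClosure s := by
    refine le_antisymm (Subgroup.closure_mono Group.subset_conjugatesOfSet)
      (Subgroup.closure_mono ?_)
    intro x hx
    rw [Group.mem_conjugatesOfSet_iff] at hx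
    obtain ⟨a, ha, hc⟩ := hx
    rw [isConj_iff] at hc
    obtain ⟨c, rfl⟩ := hc
    exact h c a ha
  rw [hs]
  exact Subgroup.normalClosure_normal

lemma mem_piResidual_of_orderOf (π : Set ℕ) {K : Type*} [Group K] [Finite K] (x : K)
    (hx : ∀ q : ℕ, q.Prime → q ∣ orderOf x → q ∉ π) : x ∈ piResidual π K := by
  rw [piResidual]
  refine Subgroup.mem_iInf.2 fun N => Subgroup.mem_iInf.2 fun hN => ?_
  obtain ⟨hNn, hNi⟩ := hN
  letI := hNn
  have h1 : orderOf ((QuotientGroup.mk x : K ⧸ N)) = 1 := by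
    rw [Nat.eq_one_iff_not_exists_prime_dvd]
    intro p hp hpd
    have h2 : p ∣ orderOf x := hpd.trans (orderOf_map_dvd (QuotientGroup.mk' N) x)
    have h3 : p ∣ N.index := by
      rw [Subgroup.index_eq_card]
      exact hpd.trans (orderOf_dvd_natCard (G := K ⧸ N) _)
    exact hx p hp h2 (hNi p hp h3)
  rw [orderOf_eq_one_iff] at h1
  exact (QuotientGroup.eq_one_iff x).1 h1

lemma piResidual_eq_closure (π : Set ℕ) (K : Type*) [Group K] [Finite K] :
    piResidual π K =
      Subgroup.closure {x : K | ∀ q : ℕ, q.Prime → q ∣ orderOf x → q ∉ π} := by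
  set s : Set K := {x : K | ∀ q : ℕ, q.Prime → q ∣ orderOf x → q ∉ π} with hsdef
  have hconj : ∀ (g : K), ∀ x ∈ s, g * x * g⁻¹ ∈ s := by
    intro g x hxs q hq hqd
    have : SemiconjBy g x (g * x * g⁻¹) := by
      unfold SemiconjBy; group
    rw [← this.orderOf_eq g] at hqd
    exact hxs q hq hqd
  have hnorm : (Subgroup.closure s).Normal := closure_normal_of_conj_mem hconj
  refine le_antisymm ?_ ((Subgroup.closure_le _).2 fun x hx =>
    mem_piResidual_of_orderOf π x hx)
  rw [piResidual]
  refine iInf₂_le (Subgroup.closure s) ⟨hnorm, ?_⟩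
  intro p hp hpi
  by_contra hpπ
  letI := hnorm
  haveI : Fact p.Prime := ⟨hp⟩
  have : Fintype (K ⧸ Subgroup.closure s) := Fintype.ofFinite _
  rw [Subgroup.index_eq_card, Nat.card_eq_fintype_card] at hpi
  obtain ⟨gbar, hg⟩ := exists_prime_orderOf_dvd_card p hpi
  obtain ⟨g, rfl⟩ := QuotientGroup.mk_surjective gbar
  have hn0 : orderOf g ≠ 0 := (orderOf_pos g).ne'
  have hcd : ((orderOf g) / p ^ (orderOf g).factorization p) ∣ orderOf g :=
    Nat.ordCompl_dvd (orderOf g) p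
  have hmem : g ^ ((orderOf g) / p ^ (orderOf g).factorization p) ∈ s := by
    intro q hq hqd
    rw [orderOf_pow, Nat.gcd_eq_right hcd,
      Nat.div_div_self (Nat.ordProj_dvd (orderOf g) p) hn0] at hqd
    have : q = p := (Nat.prime_dvd_prime_iff_eq hq hp).1 (hq.dvd_of_dvd_pow hqd)
    rwa [this]
  have hone : (QuotientGroup.mk g : K ⧸ Subgroup.closure s) ^
      ((orderOf g) / p ^ (orderOf g).factorization p) = 1 := by
    rw [← QuotientGroup.mk_pow, QuotientGroup.eq_one_iff]
    exact Subgroup.subset_closure hmem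
  have hdvd := orderOf_dvd_of_pow_eq_one hone
  rw [hg] at hdvd
  exact Nat.not_dvd_ordCompl hp hn0 hdvd

/-- Lemma 1.5(3): if `H` is `N^π`-Dnormal in `G` and `V ≤ G`, then `H ∩ V` is
`N^π`-Dnormal in `V`. -/
theorem dnormal_inf (π : Set ℕ) (hπ : ∀ p ∈ π, p.Prime)
    (G : Type*) [Group G] [Finite G] (H V : Subgroup G)
    (h : IsDnormal π H) :
    IsDnormal π ((H ⊓ V).subgroupOf V) := by
  rcases h with ⟨hsub, hnorm⟩ | ⟨hns, hres, hnlzr⟩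
  · left
    refine ⟨hsub, ⟨fun n hn v => ?_⟩⟩
    rw [Subgroup.mem_subgroupOf] at hn ⊢
    rw [Subgroup.mem_inf] at hn ⊢
    refine ⟨?_, SetLike.coe_mem _⟩
    have := hnorm.conj_mem _ hn.1 (v : G)
    simpa using this
  · right
    refine ⟨hns, ?_, ?_⟩
    · -- normality of the residual of H ⊓ V in V
      rw [piResidualIn, piResidual_eq_closure, MonoidHom.map_closure]
      apply closure_normal_of_conj_mem
      rintro v y ⟨x, hx, rfl⟩
      -- x : ↥((H ⊓ V).subgroupOf V), π'-element
      have hxW : ((x : ↥V) : G) ∈ H ⊓ V := Subgroup.mem_subgroupOf.1 x.2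
      have hordx : orderOf ((x : ↥V) : G) = orderOf x := by
        rw [Subgroup.orderOf_coe, Subgroup.orderOf_coe]
      -- the image of x in G lies in piResidualIn π H
      have hmemR : ((x : ↥V) : G) ∈ piResidualIn π H := by
        refine Subgroup.mem_map.2 ⟨⟨_, hxW.1⟩, ?_, rfl⟩
        apply mem_piResidual_of_orderOf
        intro q hq hqd
        refine hx q hq ?_
        rw [← hordx]
        rwa [Subgroup.orderOf_mk] at hqd
      -- conjugate stays in piResidualIn π H, hence in H, and clearly in V
      have hconjR : (v : G) * ((x : ↥V) : G) * (v : G)⁻¹ ∈ piResidualIn π H :=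
        hres.conj_mem _ hmemR (v : G)
      have hconjH : (v : G) * ((x : ↥V) : G) * (v : G)⁻¹ ∈ H :=
        Subgroup.map_subtype_le _ hconjR
      have hconjW : (v * (x : ↥V) * v⁻¹ : ↥V) ∈ (H ⊓ V).subgroupOf V := by
        rw [Subgroup.mem_subgroupOf, Subgroup.mem_inf]
        exact ⟨by simpa using hconjH, SetLike.coe_mem _⟩
      refine ⟨⟨v * (x : ↥V) * v⁻¹, hconjW⟩, ?_, rfl⟩
      -- this conjugate is again a π'-element
      intro q hq hqd
      have hsc : SemiconjBy v (x : ↥V) (v * (x : ↥V) * v⁻¹) := by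
        unfold SemiconjBy; group
      have : orderOf (⟨v * (x : ↥V) * v⁻¹, hconjW⟩ :
          ↥((H ⊓ V).subgroupOf V)) = orderOf x := by
        rw [Subgroup.orderOf_mk, ← Subgroup.orderOf_coe x]
        exact (hsc.orderOf_eq v).symm
      rw [this] at hqd
      exact hx q hq hqd
    · -- piResidual π V normalizes (H ⊓ V).subgroupOf V
      rw [piResidual_eq_closure, Subgroup.closure_le]
      intro v hv
      have hvG : (v : G) ∈ piResidual π G := by
        apply mem_piResidual_of_orderOf
        intro q hq hqd
        refine hv q hq ?_
        rwa [Subgroup.orderOf_coe] at hqd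
      have hvN : (v : G) ∈ Subgroup.normalizer (H : Set G) := hnlzr hvG
      rw [SetLike.mem_coe, Subgroup.mem_normalizer_iff]
      intro n
      rw [Subgroup.mem_subgroupOf, Subgroup.mem_subgroupOf, Subgroup.mem_inf,
        Subgroup.mem_inf]
      constructor
      · rintro ⟨hnH, -⟩
        refine ⟨?_, SetLike.coe_mem _⟩
        have := (Subgroup.mem_normalizer_iff.1 hvN ((n : G))).1 hnH
        simpa using this
      · rintro ⟨hnH, -⟩
        refine ⟨?_, SetLike.coe_mem _⟩
        have : (v : G) * (n : G) * (v : G)⁻¹ ∈ H := by simpa using hnH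
        exact (Subgroup.mem_normalizer_iff.1 hvN ((n : G))).2 this
end
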